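/- Let Σ be a finite set of single-headed GTGDs strongly obeying a side signature S', and let Σ' be any childish saturation of Σ. Then the shortcut chase based on Σ' emulates Σ on any Σ-fact-saturated instance: for each Σ-fact-saturated instance I and each Boolean conjunctive query Q, I,Σ ⊨ Q if and only if Q holds in an instance produced from I by a shortcut chase sequence starting at I. -/

import Mathlib

namespace GTGDPaper

/-! ## Basic syntax: atoms, facts, TGDs, CQs -/

/-- An atom: a relation name together with a list of arguments.
Arguments are natural numbers, read as variables in rule atoms
and as domain elements in facts. -/
structure Atom where
  rel : ℕ
  args : List ℕ
deriving DecidableEq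

/-- A fact is an atom whose arguments are read as domain elements. -/
abbrev Fact := Atom

/-- The variables (resp. domain elements) occurring in an atom (resp. fact). -/
def Atom.vars (A : Atom) : Finset ℕ := A.args.toFinset

/-- Apply a substitution to an atom (also used to instantiate atoms into facts and to
rename the elements of facts). -/
def Atom.rename (σ : ℕ → ℕ) (A : Atom) : Atom := ⟨A.rel, A.args.map σ⟩

/-- The active domain of a finite set of facts. -/
def adomF (I : Finset Fact) : Finset ℕ := I.biUnion Atom.vars

/-- A single-headed tuple-generating dependency (TGD):
`∀ x⃗ (body → ∃ y⃗ head)` where the existential variables are the variables of the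
head not occurring in the body. -/
structure TGD where
  body : List Atom
  head : Atom
deriving DecidableEq

def TGD.bodyVars (τ : TGD) : Finset ℕ := τ.body.foldr (fun A s => A.vars ∪ s) ∅

/-- Exported (frontier) variables: the variables occurring both in the body and the head. -/
def TGD.exported (τ : TGD) : Finset ℕ := τ.head.vars ∩ τ.bodyVars

/-- The width of a TGD: its number of exported variables. -/
def TGD.width (τ : TGD) : ℕ := τ.exported.card

/-- The existentially quantified variables of a TGD. -/
def TGD.existVars (τ : TGD) : Finset ℕ := τ.head.vars \ τ.bodyVars

/-- A full TGD: no existentially quantified variable in the head. -/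
def TGD.isFull (τ : TGD) : Prop := τ.head.vars ⊆ τ.bodyVars

/-- A linear TGD: the body is a single atom. -/
def TGD.linear (τ : TGD) : Prop := τ.body.length = 1

/-- `A` is a guard of `τ`: a body atom containing all body variables. -/
def isGuard (τ : TGD) (A : Atom) : Prop := A ∈ τ.body ∧ τ.bodyVars ⊆ A.vars

/-- A guarded TGD (GTGD). -/
def TGD.guarded (τ : TGD) : Prop := ∃ A, isGuard τ A

/-- Satisfaction of a TGD by a (possibly infinite) instance, with active-domain semantics:
every trigger of the body extends to a match of the head. -/
def TGD.holdsIn (τ : TGD) (I : Set Fact) : Prop :=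
  ∀ σ : ℕ → ℕ, (∀ A ∈ τ.body, A.rename σ ∈ I) →
    ∃ σ' : ℕ → ℕ, (∀ v ∈ τ.bodyVars, σ' v = σ v) ∧ τ.head.rename σ' ∈ I

/-- A Boolean conjunctive query: a list of atoms, all of whose variables are
existentially quantified. -/
abbrev CQ := List Atom

/-- A Boolean CQ holds in an instance if it has a match there. -/
def CQholds (Q : CQ) (I : Set Fact) : Prop :=
  ∃ σ : ℕ → ℕ, ∀ A ∈ Q, A.rename σ ∈ I

/-- Open-world query answering entailment, with the theory given as a predicate on TGDs. -/
def entailsQS (I0 : Set Fact) (R : TGD → Prop) (Q : CQ) : Prop :=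
  ∀ J : Set Fact, I0 ⊆ J → (∀ τ, R τ → τ.holdsIn J) → CQholds Q J

/-- `I0, Σ ⊨ Q` : the Boolean CQ `Q` has a match in every superinstance of `I0`
satisfying all TGDs of `Th`. -/
def entailsQ (I0 : Finset Fact) (Th : Finset TGD) (Q : CQ) : Prop :=
  entailsQS ↑I0 (· ∈ Th) Q

/-- `I0, Σ ⊨ F` : the fact `F` belongs to every superinstance of `I0` satisfying `Th`. -/
def entailsF (I0 : Finset Fact) (Th : Finset TGD) (F : Fact) : Prop :=
  ∀ J : Set Fact, ↑I0 ⊆ J → (∀ τ ∈ Th, τ.holdsIn J) → F ∈ J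

/-- Logical entailment of a TGD by a set of TGDs. -/
def logEntails (Th : Finset TGD) (τ : TGD) : Prop :=
  ∀ J : Set Fact, (∀ γ ∈ Th, γ.holdsIn J) → τ.holdsIn J

/-! ## Signatures -/

/-- A relational signature: a finite set of relation names with their arities. -/
structure Sig where
  rels : Finset ℕ
  ar : ℕ → ℕ

/-- The arity of a signature: maximal arity of its relations. -/
def Sig.arity (S : Sig) : ℕ := S.rels.sup S.ar

def Sig.wfAtom (S : Sig) (A : Atom) : Prop := A.rel ∈ S.rels ∧ A.args.length = S.ar A.rel

def Sig.wfTGD (S : Sig) (τ : TGD) : Prop := (∀ A ∈ τ.body, S.wfAtom A) ∧ S.wfAtom τ.head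

/-! ## Side signatures -/

/-- A GTGD obeys side signature `S'` if for some choice of guard atom in its body,
all other body atoms are on relations of `S'`. -/
def TGD.obeys (τ : TGD) (S' : Finset ℕ) : Prop :=
  ∃ A, isGuard τ A ∧ ∀ B ∈ τ.body, B = A ∨ B.rel ∈ S'

/-- A principal guard: a guard atom on a principal (non-side) relation. -/
def isPrincipalGuard (S' : Finset ℕ) (τ : TGD) (A : Atom) : Prop :=
  isGuard τ A ∧ A.rel ∉ S'

/-- Renaming of the exported variables of a TGD by a function `h`
(identity on the other variables). -/
def TGD.renameExported (τ : TGD) (h : ℕ → ℕ) : TGD :=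
  ⟨τ.body.map (Atom.rename fun v => if v ∈ τ.exported then h v else v),
   (Atom.rename fun v => if v ∈ τ.exported then h v else v) τ.head⟩

/-- Homomorphism-closure: the set of GTGDs is closed under maps identifying
exported variables. -/
def homClosed (Th : Finset TGD) : Prop :=
  ∀ τ ∈ Th, ∀ h : ℕ → ℕ, (∀ v ∈ τ.exported, h v ∈ τ.exported) →
    τ.renameExported h ∈ Th

/-- A set of GTGDs strongly obeys side signature `S'`: it obeys `S'`,
is homomorphism-closed, every GTGD has exactly one principal guard, and
every non-full GTGD has a principal head atom. -/
def stronglyObeys (Th : Finset TGD) (S' : Finset ℕ) : Prop :=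
  (∀ τ ∈ Th, τ.obeys S') ∧
  homClosed Th ∧
  (∀ τ ∈ Th, ∃! A : Atom, isPrincipalGuard S' τ A) ∧
  (∀ τ ∈ Th, ¬ τ.isFull → τ.head.rel ∉ S')

/-- Maximal width of a finite set of TGDs. -/
def maxWidth (Th : Finset TGD) : ℕ := Th.sup TGD.width

/-! ## Emulation -/

/-- `I0', Th'` emulates `I0, Th` on signature `S`: the two pairs entail the same
Boolean CQs over `S`. -/
def emulates (I0' : Finset Fact) (Th' : Finset TGD) (I0 : Finset Fact) (Th : Finset TGD)
    (S : Sig) : Prop :=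
  ∀ Q : CQ, (∀ A ∈ Q, S.wfAtom A) → (entailsQ I0 Th Q ↔ entailsQ I0' Th' Q)

/-! ## Semi-width -/

/-- Edge of the basic position graph of a set of TGDs: an edge from position `(R,i)` to
`(U,j)` when some TGD has an exported variable at position `i` of an `R`-atom of its body
and at position `j` of its head atom, on relation `U`. -/
def posEdge (Th : Finset TGD) (p q : ℕ × ℕ) : Prop :=
  ∃ τ ∈ Th, ∃ x ∈ τ.exported, ∃ A ∈ τ.body,
    A.rel = p.1 ∧ A.args[p.2]? = some x ∧ τ.head.rel = q.1 ∧ τ.head.args[q.2]? = some x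

/-- The basic position graph is acyclic. -/
def posAcyclic (Th : Finset TGD) : Prop :=
  ∀ p, ¬ Relation.TransGen (posEdge Th) p p

/-- Semi-width at most `w`: the TGDs decompose into a part of width at most `w` and a part
whose basic position graph is acyclic. -/
def semiWidthLe (Th : Finset TGD) (w : ℕ) : Prop :=
  ∃ T1 T2 : Finset TGD, Th = T1 ∪ T2 ∧ (∀ τ ∈ T1, τ.width ≤ w) ∧ posAcyclic T2

/-! ## Isomorphic copies -/

/-- `B` is an isomorphic copy of the atom `A`. -/
def atomIso (A B : Atom) : Prop :=
  ∃ r : ℕ → ℕ, Set.InjOn r ↑A.vars ∧ B = A.rename r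

def TGD.allVars (τ : TGD) : Finset ℕ := τ.bodyVars ∪ τ.head.vars

def TGD.renameAll (σ : ℕ → ℕ) (τ : TGD) : TGD :=
  ⟨τ.body.map (Atom.rename σ), τ.head.rename σ⟩

/-- `τ` is a variable-renaming (isomorphic copy) of the TGD `γ`. -/
def tgdIso (γ τ : TGD) : Prop :=
  ∃ r : ℕ → ℕ, Set.InjOn r ↑γ.allVars ∧ τ = γ.renameAll r

/-- An isomorphism from a finite instance `S` onto a set of facts `T`. -/
def instIso (S : Finset Fact) (T : Set Fact) : Prop :=
  ∃ h : ℕ → ℕ, Set.InjOn h ↑(adomF S) ∧ T = (Atom.rename h) '' ↑S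

/-! ## Childish instances and saturations -/

/-- A childish instance: one principal fact which is an isomorphic copy of some GTGD head
of `Th`, together with side facts whose active domain is a set of at most `w` elements
of the principal fact. -/
def childish (Th : Finset TGD) (S' : Finset ℕ) (w : ℕ) (I : Finset Fact) : Prop :=
  ∃ F ∈ I, F.rel ∉ S' ∧ (∃ τ ∈ Th, atomIso τ.head F) ∧
    (∀ G ∈ I, G ≠ F → G.rel ∈ S' ∧ G.vars ⊆ F.vars) ∧
    (adomF (I.erase F)).card ≤ w

/-- A childish saturation of `Th`: a finite set of full TGDs, each entailed by `Th`,
which is complete for fact entailment over childish instances. -/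
def childishSaturation (Th : Finset TGD) (S' : Finset ℕ) (w : ℕ) (Th' : Finset TGD) : Prop :=
  (∀ τ ∈ Th', τ.isFull) ∧
  (∀ τ ∈ Th', logEntails Th τ) ∧
  (∀ I : Finset Fact, childish Th S' w I →
    ∀ F : Fact, F.vars ⊆ adomF I → entailsF I Th F → entailsF I Th' F)

/-- A `Th`-fact-saturated instance: closed under entailed facts on the same domain. -/
def factSaturated (Th : Finset TGD) (I : Finset Fact) : Prop :=
  ∀ F : Fact, F.vars ⊆ adomF I → entailsF I Th F → F ∈ I

/-! ## Suitable GTGDs and the suitable saturation -/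

/-- An atom is `Th`-compatible: it is a side atom, or isomorphic to the head atom of
some GTGD of `Th`. -/
def compatible (Th : Finset TGD) (S' : Finset ℕ) (A : Atom) : Prop :=
  A.rel ∈ S' ∨ ∃ τ ∈ Th, atomIso τ.head A

/-- Breadth at most `b`: the non-guard body atoms only use at most `b` variables of the
principal guard. -/
def breadthLe (S' : Finset ℕ) (τ : TGD) (b : ℕ) : Prop :=
  ∃ A, isPrincipalGuard S' τ A ∧ ∃ X : Finset ℕ, X ⊆ A.vars ∧ X.card ≤ b ∧
    ∀ B ∈ τ.body, B ≠ A → B.vars ⊆ X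

/-- A `Th`-suitable GTGD: a well-formed full GTGD obeying the side signature, which is
`Th`-compatible, has exactly one principal guard, breadth at most `w` and width at
most `w`. -/
def suitable (Sg : Sig) (S' : Finset ℕ) (Th : Finset TGD) (w : ℕ) (τ : TGD) : Prop :=
  Sg.wfTGD τ ∧ τ.isFull ∧ τ.obeys S' ∧
  (∃! A : Atom, isPrincipalGuard S' τ A) ∧
  (∀ A, isPrincipalGuard S' τ A → compatible Th S' A) ∧
  compatible Th S' τ.head ∧
  breadthLe S' τ w ∧ τ.width ≤ w

/-- The trivial full GTGDs `Σ_triv`: the body consists of a principal atom `A` which is an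
isomorphic copy of a GTGD head of `Th` and of side atoms on at most `w` variables of `A`,
and the head is `A` itself. -/
def trivTGD (Sg : Sig) (S' : Finset ℕ) (Th : Finset TGD) (w : ℕ) (τ : TGD) : Prop :=
  Sg.wfTGD τ ∧ ∃ A ∈ τ.body, A.rel ∉ S' ∧ (∃ γ ∈ Th, atomIso γ.head A) ∧ τ.head = A ∧
    ∃ X : Finset ℕ, X ⊆ A.vars ∧ X.card ≤ w ∧
      ∀ B ∈ τ.body, B ≠ A → B.rel ∈ S' ∧ B.vars ⊆ X

/-- The `S'`-suitable saturation `Ω(Σ)`: closure of the suitable full GTGDs of `Th` and of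
the trivial suitable full GTGDs under the inference rules (Transitivity) and
(Principal+Transitivity), keeping only suitable conclusions. -/
inductive Sat (Sg : Sig) (S' : Finset ℕ) (Th : Finset TGD) (w : ℕ) : TGD → Prop
  | base {τ : TGD} (hτ : τ ∈ Th) (hs : suitable Sg S' Th w τ) : Sat Sg S' Th w τ
  | triv {τ : TGD} (ht : trivTGD Sg S' Th w τ) (hs : suitable Sg S' Th w τ) : Sat Sg S' Th w τ
  | transTh {β Bs1 Bs2 : List Atom} {δ : TGD} {υ : ℕ → ℕ}
      (hBs1 : ∀ B ∈ Bs1, Sat Sg S' Th w ⟨β, B⟩)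
      (hBs2 : ∀ B ∈ Bs2, trivTGD Sg S' Th w ⟨β, B⟩)
      (hδ : δ ∈ Th)
      (hfull : δ.isFull)
      (hhom : ∀ A ∈ δ.body, A.rename υ ∈ β ∨ A.rename υ ∈ Bs1 ∨ A.rename υ ∈ Bs2)
      (hs : suitable Sg S' Th w ⟨β, δ.head.rename υ⟩) :
      Sat Sg S' Th w ⟨β, δ.head.rename υ⟩
  | transSat {β Bs1 Bs2 : List Atom} {δ : TGD} {υ : ℕ → ℕ}
      (hBs1 : ∀ B ∈ Bs1, Sat Sg S' Th w ⟨β, B⟩)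
      (hBs2 : ∀ B ∈ Bs2, trivTGD Sg S' Th w ⟨β, B⟩)
      (hδ : Sat Sg S' Th w δ)
      (hfull : δ.isFull)
      (hhom : ∀ A ∈ δ.body, A.rename υ ∈ β ∨ A.rename υ ∈ Bs1 ∨ A.rename υ ∈ Bs2)
      (hs : suitable Sg S' Th w ⟨β, δ.head.rename υ⟩) :
      Sat Sg S' Th w ⟨β, δ.head.rename υ⟩
  | princTrans {β Bs1 Bs2 : List Atom} {δcc : TGD} {Acc : Atom} {δ0 δ' : TGD} {v : ℕ → ℕ}
      (hBs1 : ∀ B ∈ Bs1, Sat Sg S' Th w ⟨β, B⟩)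
      (hBs2 : ∀ B ∈ Bs2, trivTGD Sg S' Th w ⟨β, B⟩)
      (hcc : δcc ∈ Th) (hccP : δcc.head.rel ∉ S')
      (hAcc : isPrincipalGuard S' δcc Acc)
      (hδ0 : Sat Sg S' Th w δ0)
      (hiso : tgdIso δ0 δ')
      (hfull : δ'.isFull)
      (hguard : isPrincipalGuard S' δ' δcc.head)
      (hside : ∀ A ∈ δ'.body, A ≠ δcc.head → A.vars ⊆ δcc.exported)
      (hheadv : δ'.head.vars ⊆ δcc.exported)
      (hv1 : Acc.rename v ∈ β ∨ Acc.rename v ∈ Bs1 ∨ Acc.rename v ∈ Bs2)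
      (hv2 : ∀ A ∈ δcc.body, A ≠ Acc →
        (A.rename v ∈ β ∨ A.rename v ∈ Bs1 ∨ A.rename v ∈ Bs2))
      (hv3 : ∀ A ∈ δ'.body, A ≠ δcc.head →
        (A.rename v ∈ β ∨ A.rename v ∈ Bs1 ∨ A.rename v ∈ Bs2))
      (hs : suitable Sg S' Th w ⟨β, δ'.head.rename v⟩) :
      Sat Sg S' Th w ⟨β, δ'.head.rename v⟩


/-! ## Chase trees and the principal-exempt one-pass chase -/

/-- A chase tree: a finite prefix-closed set of node positions (the root is `[]`,
children of `v` are `v ++ [k]`), a labelling of nodes by finite sets of facts,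
and a recently-updated node. -/
structure CTree where
  nodes : Finset (List ℕ)
  lbl : List ℕ → Finset Fact
  recent : List ℕ

/-- All facts of a chase tree (its underlying instance). -/
def CTree.facts (T : CTree) : Finset Fact := T.nodes.biUnion T.lbl

/-- The active domain of a chase tree. -/
def CTree.adom (T : CTree) : Finset ℕ := T.nodes.biUnion fun v => adomF (T.lbl v)

/-- The initial chase tree on instance `I0`: a single root node labelled `I0`. -/
def initTree (I0 : Finset Fact) : CTree :=
  ⟨{[]}, fun v => if v = [] then I0 else ∅, []⟩

/-- A propagation step (of one side fact from the recently updated node to its parent)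
is applicable. -/
def Propagable (S' : Finset ℕ) (T : CTree) : Prop :=
  T.recent ≠ [] ∧ ∃ F ∈ T.lbl T.recent, F.rel ∈ S' ∧
    F ∉ T.lbl T.recent.dropLast ∧ F.vars ⊆ adomF (T.lbl T.recent.dropLast)

/-- One step of the principal-exempt one-pass chase for GTGDs `Th` strongly obeying
side signature `S'`. All steps apply at the recently updated node; chase steps are only
allowed when no propagation step applies; only side facts are inherited by new nodes. -/
inductive PEStep (Th : Finset TGD) (S' : Finset ℕ) : CTree → CTree → Prop
  /-- Propagation step: copy exactly one side fact to the parent (which must guard it and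
  not already contain it); the parent becomes recently updated. -/
  | prop (T : CTree) (F : Fact)
      (hrec : T.recent ∈ T.nodes) (hnr : T.recent ≠ [])
      (hF : F ∈ T.lbl T.recent) (hside : F.rel ∈ S')
      (hnew : F ∉ T.lbl T.recent.dropLast)
      (hgd : F.vars ⊆ adomF (T.lbl T.recent.dropLast)) :
      PEStep Th S' T
        ⟨T.nodes,
         Function.update T.lbl T.recent.dropLast
           (insert F (T.lbl T.recent.dropLast)),
         T.recent.dropLast⟩
  /-- Chase step with a full side GTGD: add the derived fact (which must be new in the
  underlying instance) to the recently updated node. -/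
  | fullSide (T : CTree) (τ : TGD) (σ : ℕ → ℕ)
      (hnp : ¬ Propagable S' T)
      (hτ : τ ∈ Th) (hfull : τ.isFull) (hside : τ.head.rel ∈ S')
      (htrig : ∀ A ∈ τ.body, A.rename σ ∈ T.lbl T.recent)
      (hnew : τ.head.rename σ ∉ T.facts) :
      PEStep Th S' T
        ⟨T.nodes,
         Function.update T.lbl T.recent (insert (τ.head.rename σ) (T.lbl T.recent)),
         T.recent⟩
  /-- Chase step with a non-full GTGD: create a fresh child of the recently updated node,
  containing the instantiated head (with fresh nulls for the existential variables)
  together with inherited side facts of the parent guarded by the new fact. -/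
  | nonfull (T : CTree) (τ : TGD) (σ σ' : ℕ → ℕ) (k : ℕ) (inh : Finset Fact)
      (hnp : ¬ Propagable S' T)
      (hτ : τ ∈ Th) (hnf : ¬ τ.isFull)
      (htrig : ∀ A ∈ τ.body, A.rename σ ∈ T.lbl T.recent)
      (hext : ∀ x ∈ τ.bodyVars, σ' x = σ x)
      (hfresh : ∀ y ∈ τ.existVars, σ' y ∉ T.adom)
      (hinj : Set.InjOn σ' ↑τ.existVars)
      (hnewnode : (T.recent ++ [k]) ∉ T.nodes)
      (hinh : inh ⊆ T.lbl T.recent)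
      (hinhside : ∀ F ∈ inh, F.rel ∈ S' ∧ F.vars ⊆ (τ.head.rename σ').vars) :
      PEStep Th S' T
        ⟨insert (T.recent ++ [k]) T.nodes,
         Function.update T.lbl (T.recent ++ [k]) (insert (τ.head.rename σ') inh),
         T.recent ++ [k]⟩
  /-- Relaxed chase step with a full principal TGD: create a fresh child of the
  recently updated node, containing the instantiated head together with inherited side
  facts of the parent guarded by it (no fresh value is introduced). -/
  | relaxed (T : CTree) (τ : TGD) (σ : ℕ → ℕ) (k : ℕ) (inh : Finset Fact)
      (hnp : ¬ Propagable S' T)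
      (hτ : τ ∈ Th) (hfull : τ.isFull) (hprin : τ.head.rel ∉ S')
      (htrig : ∀ A ∈ τ.body, A.rename σ ∈ T.lbl T.recent)
      (hnewnode : (T.recent ++ [k]) ∉ T.nodes)
      (hinh : inh ⊆ T.lbl T.recent)
      (hinhside : ∀ F ∈ inh, F.rel ∈ S' ∧ F.vars ⊆ (τ.head.rename σ).vars) :
      PEStep Th S' T
        ⟨insert (T.recent ++ [k]) T.nodes,
         Function.update T.lbl (T.recent ++ [k]) (insert (τ.head.rename σ) inh),
         T.recent ++ [k]⟩

/-- A principal-exempt one-pass tree-like chase proof of the fact `F` from `I0` and `Th`: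
a sequence of principal-exempt one-pass chase steps from the initial tree on `I0`,
ending in a tree containing `F` in some node. -/
def PEProof (I0 : Finset Fact) (Th : Finset TGD) (S' : Finset ℕ) (F : Fact) : Prop :=
  ∃ T : CTree, Relation.ReflTransGen (PEStep Th S') (initTree I0) T ∧ F ∈ T.facts

/-! ## The shortcut chase -/

/-- A tree of (possibly infinite) sets of facts, used for the shortcut chase. -/
structure SCTree where
  nodes : Finset (List ℕ)
  lbl : List ℕ → Set Fact

/-- The underlying instance of a shortcut chase tree. -/
def SCTree.facts (T : SCTree) : Set Fact := { F | ∃ v ∈ T.nodes, F ∈ T.lbl v }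

/-- Closure of a set of facts under the full TGDs of a finite set `Th'`. -/
def fullClosure (Th' : Finset TGD) (X : Set Fact) : Set Fact :=
  { F | ∀ J : Set Fact, X ⊆ J → (∀ τ ∈ Th', τ.isFull → τ.holdsIn J) → F ∈ J }

/-- Closure of a set of facts under the full TGDs of a family `R` of TGDs. -/
def fullClosureP (R : TGD → Prop) (X : Set Fact) : Set Fact :=
  { F | ∀ J : Set Fact, X ⊆ J → (∀ τ, R τ → τ.isFull → τ.holdsIn J) → F ∈ J }

/-- The initial shortcut chase tree on instance `I`. -/
def initSC (I : Finset Fact) : SCTree :=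
  ⟨{[]}, fun v => if v = [] then ↑I else ∅⟩

/-- A step of the shortcut chase based on the saturation `Th'`: fire a non-full GTGD of
`Th` at a node, creating a fresh child containing the new fact (with fresh nulls),
all facts of the parent guarded by it, and (full saturation step) all consequences of
the full GTGDs of `Th'`. There are no propagation steps. -/
inductive SCStep (Th Th' : Finset TGD) : SCTree → SCTree → Prop
  | step (T : SCTree) (g : List ℕ) (τ : TGD) (σ σ' : ℕ → ℕ) (k : ℕ)
      (hg : g ∈ T.nodes) (hτ : τ ∈ Th) (hnf : ¬ τ.isFull)
      (htrig : ∀ A ∈ τ.body, A.rename σ ∈ T.lbl g)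
      (hext : ∀ x ∈ τ.bodyVars, σ' x = σ x)
      (hfresh : ∀ y ∈ τ.existVars, ∀ u ∈ T.nodes, ∀ F ∈ T.lbl u, σ' y ∉ F.vars)
      (hinj : Set.InjOn σ' ↑τ.existVars)
      (hnew : (g ++ [k]) ∉ T.nodes) :
      SCStep Th Th' T
        ⟨insert (g ++ [k]) T.nodes,
         Function.update T.lbl (g ++ [k])
           (fullClosure Th'
             (insert (τ.head.rename σ')
               { F | F ∈ T.lbl g ∧ F.vars ⊆ (τ.head.rename σ').vars }))⟩

/-! ## The tree-like chase for linear TGDs, tight matches -/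

/-- A tree-like chase for linear TGDs: the root `[]` implicitly holds the initial
instance; each non-root node holds exactly one fact `fct v` and records the rule
`rule v` used to create it. -/
structure LinChase where
  nodes : Finset (List ℕ)
  fct : List ℕ → Fact
  rule : List ℕ → TGD

/-- Validity of a linear chase tree for initial instance `I0` and linear TGDs `Th`:
each non-root node is created by firing its rule on the fact of its parent (or a fact of
`I0` for children of the root), with fresh distinct nulls for existential variables. -/
def LinChase.valid (C : LinChase) (I0 : Finset Fact) (Th : Finset TGD) : Prop :=
  [] ∈ C.nodes ∧ (∀ v ∈ C.nodes, ∀ u : List ℕ, u <+: v → u ∈ C.nodes) ∧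
  ∀ v ∈ C.nodes, v ≠ [] →
    C.rule v ∈ Th ∧
    ∃ B : Atom, ∃ σ : ℕ → ℕ, (C.rule v).body = [B] ∧
      (v.dropLast = [] → B.rename σ ∈ I0) ∧
      (v.dropLast ≠ [] → B.rename σ = C.fct v.dropLast) ∧
      C.fct v = (C.rule v).head.rename σ ∧
      Set.InjOn σ ↑(C.rule v).existVars ∧
      ∀ y ∈ (C.rule v).existVars,
        σ y ∉ adomF I0 ∧ ∀ u ∈ C.nodes, ¬ v <+: u → σ y ∉ (C.fct u).vars

/-- All facts of a linear chase tree, including the initial instance. -/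
def LinChase.allFacts (C : LinChase) (I0 : Finset Fact) : Set Fact :=
  ↑I0 ∪ { F | ∃ v ∈ C.nodes, v ≠ [] ∧ F = C.fct v }

/-- A match of the CQ `Q` in the linear chase tree. -/
def LinChase.isMatch (C : LinChase) (I0 : Finset Fact) (σ : ℕ → ℕ) (Q : CQ) : Prop :=
  ∀ A ∈ Q, A.rename σ ∈ C.allFacts I0

/-- Longest common prefix of two lists: the least common ancestor of two tree nodes. -/
def lcp : List ℕ → List ℕ → List ℕ
  | a :: as, b :: bs => if a = b then a :: lcp as bs else []
  | _, _ => []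

/-- The nodes of the chase tree containing an image fact of the match. -/
def imageNodes (C : LinChase) (σ : ℕ → ℕ) (Q : CQ) : Set (List ℕ) :=
  { v | v ∈ C.nodes ∧ v ≠ [] ∧ ∃ A ∈ Q, A.rename σ = C.fct v }

/-- The augmented image of a match: the closure of its image under least common
ancestors, together with the root. -/
def augImage (C : LinChase) (σ : ℕ → ℕ) (Q : CQ) : Set (List ℕ) :=
  {[]} ∪ imageNodes C σ Q ∪
    { u | ∃ v ∈ imageNodes C σ Q, ∃ w ∈ imageNodes C σ Q, u = lcp v w }

/-- `n` is the image parent of `n'`: the lowest strict ancestor of `n'` within the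
augmented image. -/
def imageParent (S : Set (List ℕ)) (n n' : List ℕ) : Prop :=
  n ∈ S ∧ n' ∈ S ∧ n <+: n' ∧ n ≠ n' ∧
    ∀ m ∈ S, n <+: m → m <+: n' → (m = n ∨ m = n')

/-- Nodes `n` (an ancestor) and `n'` are far apart: between them lie two distinct
generated facts produced by the same rule, with the same equality pattern between
positions, and sharing values only at identical positions. -/
def farApart (C : LinChase) (n n' : List ℕ) : Prop :=
  ∃ n1 ∈ C.nodes, ∃ n2 ∈ C.nodes, n1 ≠ [] ∧ n2 ≠ [] ∧ n1 ≠ n2 ∧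
    n <+: n1 ∧ n1 <+: n2 ∧ n2 <+: n' ∧
    C.fct n1 ≠ C.fct n2 ∧ C.rule n1 = C.rule n2 ∧
    (∀ i j : ℕ, ((C.fct n1).args[i]? = (C.fct n1).args[j]? ↔
      (C.fct n2).args[i]? = (C.fct n2).args[j]?)) ∧
    (∀ a : ℕ, a ∈ (C.fct n1).args → a ∈ (C.fct n2).args →
      ∀ i : ℕ, ((C.fct n1).args[i]? = some a ↔ (C.fct n2).args[i]? = some a))

/-- A tight match: every node of the augmented image is near its image parent. -/
def tightMatch (C : LinChase) (σ : ℕ → ℕ) (Q : CQ) : Prop :=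
  ∀ n n', imageParent (augImage C σ Q) n n' → ¬ farApart C n n'


/-! ## Linearization -/

/-- Canonical childish instances: well-formed childish instances whose active domain is
contained in `{0, …, arity(Sg) - 1}` (one representative per isomorphism type). -/
def canonChildish (Sg : Sig) (S' : Finset ℕ) (Th : Finset TGD) (w : ℕ) :
    Set (Finset Fact) :=
  { S | childish Th S' w S ∧ (∀ F ∈ S, Sg.wfAtom F) ∧ adomF S ⊆ Finset.range Sg.arity }

/-- The marked elements of a childish instance with principal fact `P`: the active domain
of its side part. -/
def markedElems (S : Finset Fact) (P : Fact) : Finset ℕ := adomF (S.erase P)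

/-- A homomorphism from the marked elements of `S` (with principal fact `P`) to
themselves, extended as the identity elsewhere. -/
def markedHom (S : Finset Fact) (P : Fact) (h : ℕ → ℕ) : Prop :=
  (∀ x ∈ markedElems S P, h x ∈ markedElems S P) ∧ ∀ x, x ∉ markedElems S P → h x = x

/-- The closure `S*` of `h(S)` under the full TGDs of the `S'`-suitable saturation of
`Th`. -/
def satClosure (Sg : Sig) (S' : Finset ℕ) (Th : Finset TGD) (w : ℕ)
    (S : Finset Fact) (h : ℕ → ℕ) : Set Fact :=
  fullClosureP (Sat Sg S' Th w) ((Atom.rename h) '' ↑S)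

/-- The (Instantiate) rules of `Linearize(Σ)`: for every canonical childish instance `S`
with principal fact `P`, marked homomorphism `h`, and fact `F` of the closure `S*` of
`h(S)`, the full linear TGD `R_S(h(x⃗)) → F`. The fresh relation `R_S` is named by the
injection `ρ`. -/
def instantiateRules (Sg : Sig) (S' : Finset ℕ) (Th : Finset TGD) (w : ℕ)
    (ρ : Finset Fact → ℕ) : Set TGD :=
  { τ | ∃ S ∈ canonChildish Sg S' Th w, ∃ P ∈ S, P.rel ∉ S' ∧
        ∃ h : ℕ → ℕ, markedHom S P h ∧
        ∃ F ∈ satClosure Sg S' Th w S h,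
          τ = ⟨[⟨ρ S, P.args.map h⟩], F⟩ }

/-- The (Lift) rules of `Linearize(Σ)`: for every canonical childish instance `S` with
principal fact `P`, marked homomorphism `h` with closure `S*`, non-full GTGD `δ` of `Th`
and match `h'` of the body of `δ` in `S*`, extended with fresh distinct values `σ` for
the existential variables of `δ`, the linear TGD `R_S(h(x⃗)) → ∃ w⃗ R_{S''}(h'(z⃗), w⃗)`
where `S''` is the canonical childish instance isomorphic (via `g`) to the instance made
of the instantiated head of `δ` together with the facts of `S*` using only elements of
`h'(z⃗)` for `z⃗` the exported variables of `δ`. -/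
def liftRules (Sg : Sig) (S' : Finset ℕ) (Th : Finset TGD) (w : ℕ)
    (ρ : Finset Fact → ℕ) : Set TGD :=
  { τ | ∃ S ∈ canonChildish Sg S' Th w, ∃ P ∈ S, P.rel ∉ S' ∧
        ∃ h : ℕ → ℕ, markedHom S P h ∧
        ∃ δ ∈ Th, ¬ δ.isFull ∧
        ∃ h' σ : ℕ → ℕ,
          (∀ A ∈ δ.body, A.rename h' ∈ satClosure Sg S' Th w S h) ∧
          (∀ x ∈ δ.bodyVars, σ x = h' x) ∧
          Set.InjOn σ ↑δ.existVars ∧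
          (∀ y ∈ δ.existVars, ∀ G ∈ satClosure Sg S' Th w S h, σ y ∉ G.vars) ∧
        ∃ S'' ∈ canonChildish Sg S' Th w, ∃ P'' ∈ S'', P''.rel ∉ S' ∧
        ∃ g : ℕ → ℕ, Set.InjOn g ↑(adomF S'') ∧
          P''.rename g = δ.head.rename σ ∧
          (Atom.rename g) '' ↑S'' =
            insert (δ.head.rename σ)
              { G | G ∈ satClosure Sg S' Th w S h ∧
                    G.vars ⊆ Finset.image h' δ.exported } ∧
          τ = ⟨[⟨ρ S, P.args.map h⟩], ⟨ρ S'', P''.args.map g⟩⟩ }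

/-- `Linearize(Σ)`: the linear TGDs produced by the rules (Instantiate) and (Lift). -/
def linearize (Sg : Sig) (S' : Finset ℕ) (Th : Finset TGD) (w : ℕ)
    (ρ : Finset Fact → ℕ) : Set TGD :=
  instantiateRules Sg S' Th w ρ ∪ liftRules Sg S' Th w ρ

/-- The instance `I^Lin`: `I` together with, for every principal fact `F` of `I` and
every set of at most `w` elements of `F`, the fact `R_S(a⃗)` for `S` the canonical
representative of the childish instance made of `F` and the side facts of `I` on the
chosen elements. -/
def ILin (Sg : Sig) (S' : Finset ℕ) (Th : Finset TGD) (w : ℕ)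
    (ρ : Finset Fact → ℕ) (I : Finset Fact) : Set Fact :=
  ↑I ∪ { G | ∃ F ∈ I, F.rel ∉ S' ∧ ∃ Ps : Finset ℕ, Ps ⊆ F.vars ∧ Ps.card ≤ w ∧
        ∃ S0 ∈ canonChildish Sg S' Th w, ∃ P0 ∈ S0, P0.rel ∉ S' ∧
        ∃ g : ℕ → ℕ, Set.InjOn g ↑(adomF S0) ∧ P0.rename g = F ∧
          (Atom.rename g) '' ↑S0 =
            insert F { H | H ∈ I ∧ H.rel ∈ S' ∧ H.vars ⊆ Ps } ∧
        G = ⟨ρ S0, P0.args.map g⟩ }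


/-! ## Multi-headed TGDs and TGDs with constants -/

/-- An atom possibly containing constants: arguments are either variables (`.inl`) or
constants (`.inr`). -/
structure CAtom where
  rel : ℕ
  args : List (ℕ ⊕ ℕ)
deriving DecidableEq

/-- The variables of an atom with constants. -/
def CAtom.vars (A : CAtom) : Finset ℕ := (A.args.filterMap Sum.getLeft?).toFinset

/-- Whether an atom with constants is actually constant-free. -/
def CAtom.constantFree (A : CAtom) : Prop := ∀ t ∈ A.args, t.isLeft

/-- Instantiate an atom with constants by a variable assignment (constants denote
themselves). -/
def CAtom.inst (σ : ℕ → ℕ) (A : CAtom) : Fact := ⟨A.rel, A.args.map (Sum.elim σ id)⟩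

def Sig.wfCAtom (S : Sig) (A : CAtom) : Prop := A.rel ∈ S.rels ∧ A.args.length = S.ar A.rel

/-- A multi-headed TGD with constants: body and head are conjunctions of atoms which may
contain constants. -/
structure MTGD where
  body : List CAtom
  head : List CAtom
deriving DecidableEq

def MTGD.bodyVars (τ : MTGD) : Finset ℕ := τ.body.foldr (fun A s => A.vars ∪ s) ∅

/-- A multi-headed TGD is guarded when some body atom contains all body variables. -/
def MTGD.guarded (τ : MTGD) : Prop := ∃ A ∈ τ.body, τ.bodyVars ⊆ A.vars

/-- A multi-headed GTGD obeys side signature `S'`. -/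
def MTGD.obeys (τ : MTGD) (S' : Finset ℕ) : Prop :=
  ∃ A, (A ∈ τ.body ∧ τ.bodyVars ⊆ A.vars) ∧ ∀ B ∈ τ.body, B = A ∨ B.rel ∈ S'

def MTGD.holdsIn (τ : MTGD) (I : Set Fact) : Prop :=
  ∀ σ : ℕ → ℕ, (∀ A ∈ τ.body, A.inst σ ∈ I) →
    ∃ σ' : ℕ → ℕ, (∀ v ∈ τ.bodyVars, σ' v = σ v) ∧ ∀ A ∈ τ.head, A.inst σ' ∈ I

def Sig.wfMTGD (S : Sig) (τ : MTGD) : Prop :=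
  (∀ A ∈ τ.body, S.wfCAtom A) ∧ (∀ A ∈ τ.head, S.wfCAtom A)

/-- A single-headed TGD with constants. -/
structure CTGD where
  body : List CAtom
  head : CAtom
deriving DecidableEq

def CTGD.bodyVars (τ : CTGD) : Finset ℕ := τ.body.foldr (fun A s => A.vars ∪ s) ∅

def CTGD.guarded (τ : CTGD) : Prop := ∃ A ∈ τ.body, τ.bodyVars ⊆ A.vars

def CTGD.obeys (τ : CTGD) (S' : Finset ℕ) : Prop :=
  ∃ A, (A ∈ τ.body ∧ τ.bodyVars ⊆ A.vars) ∧ ∀ B ∈ τ.body, B = A ∨ B.rel ∈ S'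

def CTGD.holdsIn (τ : CTGD) (I : Set Fact) : Prop :=
  ∀ σ : ℕ → ℕ, (∀ A ∈ τ.body, A.inst σ ∈ I) →
    ∃ σ' : ℕ → ℕ, (∀ v ∈ τ.bodyVars, σ' v = σ v) ∧ τ.head.inst σ' ∈ I

def Sig.wfCTGD (S : Sig) (τ : CTGD) : Prop :=
  (∀ A ∈ τ.body, S.wfCAtom A) ∧ S.wfCAtom τ.head

/-- A conjunctive query possibly containing constants. -/
abbrev CCQ := List CAtom

def CCQholds (Q : CCQ) (I : Set Fact) : Prop := ∃ σ : ℕ → ℕ, ∀ A ∈ Q, A.inst σ ∈ I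

/-- OWQA entailment for multi-headed TGDs with constants. -/
def entailsQM (I0 : Finset Fact) (Th : Finset MTGD) (Q : CCQ) : Prop :=
  ∀ J : Set Fact, ↑I0 ⊆ J → (∀ τ ∈ Th, τ.holdsIn J) → CCQholds Q J

/-- OWQA entailment for single-headed TGDs with constants. -/
def entailsQC (I0 : Finset Fact) (Th : Finset CTGD) (Q : CCQ) : Prop :=
  ∀ J : Set Fact, ↑I0 ⊆ J → (∀ τ ∈ Th, τ.holdsIn J) → CCQholds Q J

/-- A constant-free atom viewed as an atom with constants. -/
def Atom.toCAtom (A : Atom) : CAtom := ⟨A.rel, A.args.map Sum.inl⟩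


/-! ## Encodings and machine-based complexity -/

/-- The identity finite encoding of bit strings. -/
def boolListEnc : Computability.Encoding (List Bool) Bool where
  encode := id
  decode := fun l => some l
  decode_encode := fun _ => rfl

/-- Self-delimiting encoding of a natural number as a bit string. -/
def encNat (n : ℕ) : List Bool := List.replicate n true ++ [false]

/-- Encoding of a list as a bit string, given an encoding of its elements. -/
def encListBy {α : Type} (f : α → List Bool) (l : List α) : List Bool :=
  encNat l.length ++ l.foldr (fun a r => f a ++ r) []

def encAtom (A : Atom) : List Bool := encNat A.rel ++ encListBy encNat A.args

def encFact : Fact → List Bool := encAtom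

def encTGD (τ : TGD) : List Bool := encListBy encAtom τ.body ++ encAtom τ.head

def encCQ (Q : CQ) : List Bool := encListBy encAtom Q

def encSum (t : ℕ ⊕ ℕ) : List Bool :=
  match t with
  | .inl v => true :: encNat v
  | .inr c => false :: encNat c

def encCAtom (A : CAtom) : List Bool := encNat A.rel ++ encListBy encSum A.args

def encMTGD (τ : MTGD) : List Bool := encListBy encCAtom τ.body ++ encListBy encCAtom τ.head

def encCTGD (τ : CTGD) : List Bool := encListBy encCAtom τ.body ++ encCAtom τ.head

/-- Encoding of a signature given as a list of (relation, arity) pairs. -/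
def encSigL (l : List (ℕ × ℕ)) : List Bool :=
  encListBy (fun p => encNat p.1 ++ encNat p.2) l

/-- Encoding of an OWQA input: an instance, a set of TGDs, and a CQ. -/
def encOWQA (I0 : List Fact) (Th : List TGD) (Q : CQ) : List Bool :=
  encListBy encFact I0 ++ encListBy encTGD Th ++ encCQ Q

/-- Pairing of an input string with a certificate string. -/
def pairCode (u v : List Bool) : List Bool := encNat u.length ++ u ++ v

/-- The signature described by a list of (relation, arity) pairs. -/
def sigOf (l : List (ℕ × ℕ)) : Sig :=
  ⟨(l.map Prod.fst).toFinset, fun r => ((l.lookup r).getD 0)⟩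

/-- `f` is computed by a deterministic Turing machine within time `T` (as a function of
the input length). -/
def ComputedInTime (f : List Bool → Bool) (T : ℕ → ℕ) : Prop :=
  ∃ c : Turing.TM2ComputableInTime boolListEnc.encode Computability.encodingBoolBool.encode f,
    ∀ n, c.time n ≤ T n

/-- The machine `M` (with bit-string input and output alphabets), started on input `x`,
halts with output `y` within `m` steps. -/
def OutputsInSteps (M : Turing.TM2ComputableAux Bool Bool) (x y : List Bool) (m : ℕ) :
    Prop :=
  Nonempty (Turing.TM2OutputsInTime M.tm (x.map M.inputAlphabet.invFun)
    (some (y.map M.outputAlphabet.invFun)) m)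







/-! ### Auxiliary development for the proof of `shortcut_chase_complete` -/

section Aux

open Classical

/-! #### Basic lemmas on atoms and renamings -/

lemma Atom.rename_rename (f g : ℕ → ℕ) (A : Atom) :
    (A.rename f).rename g = A.rename (g ∘ f) := by
  simp [Atom.rename, List.map_map]

lemma Atom.vars_rename (f : ℕ → ℕ) (A : Atom) :
    (A.rename f).vars = A.vars.image f := by
  ext b
  simp [Atom.rename, Atom.vars, List.mem_toFinset, Finset.mem_image]

lemma Atom.rename_congr {f g : ℕ → ℕ} {A : Atom} (h : ∀ a ∈ A.vars, f a = g a) :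
    A.rename f = A.rename g := by
  simp only [Atom.rename, Atom.mk.injEq, true_and]
  exact List.map_congr_left (fun a ha => h a (List.mem_toFinset.2 ha))

lemma Atom.rename_id (A : Atom) : A.rename id = A := by
  simp [Atom.rename]

lemma Atom.rel_rename (f : ℕ → ℕ) (A : Atom) : (A.rename f).rel = A.rel := rfl

lemma mem_foldr_vars {l : List Atom} {x : ℕ} :
    x ∈ l.foldr (fun A s => A.vars ∪ s) ∅ ↔ ∃ A ∈ l, x ∈ A.vars := by
  induction l with
  | nil => simp
  | cons B t ih => simp [ih]

lemma TGD.mem_bodyVars {τ : TGD} {x : ℕ} :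
    x ∈ τ.bodyVars ↔ ∃ A ∈ τ.body, x ∈ A.vars := mem_foldr_vars

lemma TGD.exist_not_body {τ : TGD} {y : ℕ} (h : y ∈ τ.existVars) : y ∉ τ.bodyVars :=
  (Finset.mem_sdiff.1 h).2

lemma TGD.head_var_cases {τ : TGD} {x : ℕ} (h : x ∈ τ.head.vars) :
    x ∈ τ.existVars ∨ x ∈ τ.bodyVars := by
  by_cases hb : x ∈ τ.bodyVars
  · exact Or.inr hb
  · exact Or.inl (Finset.mem_sdiff.2 ⟨h, hb⟩)

/-- Set-valued active domain. -/
def adomS (X : Set Fact) : Set ℕ := {a | ∃ F ∈ X, a ∈ F.vars}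

lemma adomS_mono {X Y : Set Fact} (h : X ⊆ Y) : adomS X ⊆ adomS Y :=
  fun _ ⟨F, hF, ha⟩ => ⟨F, h hF, ha⟩

lemma mem_adomS_of_mem {X : Set Fact} {F : Fact} (hF : F ∈ X) {a : ℕ} (ha : a ∈ F.vars) :
    a ∈ adomS X := ⟨F, hF, ha⟩

lemma adomS_coe (S : Finset Fact) : adomS ↑S = ↑(adomF S) := by
  ext a
  simp [adomS, adomF, Finset.mem_biUnion]

lemma adomS_finite {X : Set Fact} (h : X.Finite) : (adomS X).Finite := by
  have : adomS X ⊆ ⋃ F ∈ X, ↑F.vars := by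
    intro a ⟨F, hF, ha⟩; exact Set.mem_biUnion hF (by exact_mod_cast ha)
  exact Set.Finite.subset (Set.Finite.biUnion h (fun F _ => (F.vars : Set ℕ).toFinite)) this

/-- Entailment of a fact from a set-valued instance. -/
def entailsS (Th : Finset TGD) (X : Set Fact) (F : Fact) : Prop :=
  ∀ J : Set Fact, X ⊆ J → (∀ τ ∈ Th, τ.holdsIn J) → F ∈ J

lemma entailsS_of_mem {Th : Finset TGD} {X : Set Fact} {F : Fact} (h : F ∈ X) :
    entailsS Th X F := fun _ hJ _ => hJ h

lemma entailsS_mono {Th : Finset TGD} {X Y : Set Fact} {F : Fact} (hXY : X ⊆ Y)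
    (h : entailsS Th X F) : entailsS Th Y F :=
  fun J hJ hTh => h J (hXY.trans hJ) hTh

lemma entailsF_iff_entailsS {Th : Finset TGD} {X : Finset Fact} {F : Fact} :
    entailsF X Th F ↔ entailsS Th ↑X F := Iff.rfl

/-- A single application of a full TGD yields an entailed fact. -/
lemma entailsS_full_step {Th : Finset TGD} {X : Set Fact} {τ : TGD} (hτ : τ ∈ Th)
    (hfull : τ.isFull) {σ : ℕ → ℕ} (htrig : ∀ A ∈ τ.body, A.rename σ ∈ X) :
    entailsS Th X (τ.head.rename σ) := by
  intro J hXJ hTh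
  obtain ⟨σ', hagree, hmem⟩ := hTh τ hτ σ (fun A hA => hXJ (htrig A hA))
  have : τ.head.rename σ = τ.head.rename σ' := by
    refine Atom.rename_congr (fun a ha => ?_)
    exact (hagree a (hfull ha)).symm
  rwa [this]

/-! #### Lemmas on `fullClosure` -/

lemma subset_fullClosure (Th' : Finset TGD) (X : Set Fact) : X ⊆ fullClosure Th' X :=
  fun _ hF => fun _ hXJ _ => hXJ hF

lemma fullClosure_subset {Th' : Finset TGD} {X J : Set Fact} (hXJ : X ⊆ J)
    (hJ : ∀ τ ∈ Th', τ.isFull → τ.holdsIn J) : fullClosure Th' X ⊆ J :=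
  fun _ hF => hF J hXJ hJ

/-- Facts of the full closure are entailed (via `Th`) from the base, provided every
TGD of `Th'` is entailed by `Th`. -/
lemma fullClosure_entailsS {Th Th' : Finset TGD} (hent : ∀ τ ∈ Th', logEntails Th τ)
    {X : Set Fact} {F : Fact} (hF : F ∈ fullClosure Th' X) : entailsS Th X F := by
  intro J hXJ hTh
  exact hF J hXJ (fun τ' hτ' _ => hent τ' hτ' J (fun γ hγ => hTh γ hγ))

lemma entailsS_of_entailsS_fullClosure {Th Th' : Finset TGD}
    (hent : ∀ τ ∈ Th', logEntails Th τ) {X : Set Fact} {F : Fact}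
    (h : entailsS Th (fullClosure Th' X) F) : entailsS Th X F := by
  intro J hXJ hTh
  refine h J ?_ hTh
  exact fullClosure_subset hXJ (fun τ' hτ' _ => hent τ' hτ' J (fun γ hγ => hTh γ hγ))

lemma adomS_fullClosure (Th' : Finset TGD) (X : Set Fact) :
    adomS (fullClosure Th' X) ⊆ adomS X := by
  have hsub : fullClosure Th' X ⊆ X ∪ {F : Fact | ↑F.vars ⊆ adomS X} := by
    refine fullClosure_subset (Set.subset_union_left) ?_
    intro τ hτ hfull σ htrig
    refine ⟨σ, fun _ _ => rfl, Or.inr ?_⟩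
    intro a ha
    rw [Atom.vars_rename] at ha
    obtain ⟨x, hx, rfl⟩ := Finset.mem_image.1 ha
    obtain ⟨A, hA, hxA⟩ := TGD.mem_bodyVars.1 (hfull hx)
    have : σ x ∈ (A.rename σ).vars := by
      rw [Atom.vars_rename]; exact Finset.mem_image_of_mem σ hxA
    rcases htrig A hA with hA' | hA'
    · exact mem_adomS_of_mem hA' this
    · exact hA' (by exact_mod_cast this)
  intro a ⟨F, hF, ha⟩
  rcases hsub hF with h | h
  · exact mem_adomS_of_mem h ha
  · exact h (by exact_mod_cast ha)

lemma list_bounded_finite (s : Set ℕ) (hs : s.Finite) :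
    ∀ N : ℕ, {l : List ℕ | l.length ≤ N ∧ ∀ a ∈ l, a ∈ s}.Finite := by
  intro N
  induction N with
  | zero =>
    refine Set.Finite.subset (Set.finite_singleton []) ?_
    rintro l ⟨hl, -⟩
    simp [List.length_eq_zero_iff.1 (Nat.le_zero.1 hl)]
  | succ n ih =>
    have : {l : List ℕ | l.length ≤ n + 1 ∧ ∀ a ∈ l, a ∈ s} ⊆
        insert [] (Set.image2 (· :: ·) s {l : List ℕ | l.length ≤ n ∧ ∀ a ∈ l, a ∈ s}) := by
      rintro l ⟨hl, hmem⟩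
      cases l with
      | nil => exact Set.mem_insert _ _
      | cons a t =>
        refine Set.mem_insert_of_mem _ (Set.mem_image2_of_mem (hmem a (by simp)) ?_)
        exact ⟨Nat.le_of_succ_le_succ hl, fun b hb => hmem b (by simp [hb])⟩
    exact Set.Finite.subset ((Set.Finite.image2 _ hs ih).insert []) this

lemma fullClosure_finite (Th' : Finset TGD) {X : Set Fact} (hX : X.Finite) :
    (fullClosure Th' X).Finite := by
  classical
  set N := Th'.sup (fun τ => τ.head.args.length) with hN
  set big : Set Fact :=
    {F : Fact | F.rel ∈ Th'.image (fun τ => τ.head.rel) ∧ F.args.length ≤ N ∧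
      ↑F.vars ⊆ adomS X} with hbig
  have hclosed : fullClosure Th' X ⊆ X ∪ big := by
    refine fullClosure_subset Set.subset_union_left ?_
    intro τ hτ hfull σ htrig
    refine ⟨σ, fun _ _ => rfl, Or.inr ?_⟩
    refine ⟨Finset.mem_image_of_mem _ hτ, ?_, ?_⟩
    · simpa [Atom.rename] using Finset.le_sup (f := fun τ : TGD => τ.head.args.length) hτ
    · intro a ha
      rw [Atom.vars_rename] at ha
      obtain ⟨x, hx, rfl⟩ := Finset.mem_image.1 (by exact_mod_cast ha)
      obtain ⟨A, hA, hxA⟩ := TGD.mem_bodyVars.1 (hfull hx)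
      have hmem : σ x ∈ (A.rename σ).vars := by
        rw [Atom.vars_rename]; exact Finset.mem_image_of_mem σ hxA
      rcases htrig A hA with hA' | hA'
      · exact mem_adomS_of_mem hA' hmem
      · exact hA'.2.2 (by exact_mod_cast hmem)
  have hbigfin : big.Finite := by
    have hinj : big ⊆ (fun p : ℕ × List ℕ => (⟨p.1, p.2⟩ : Atom)) ''
        ((↑(Th'.image (fun τ => τ.head.rel)) : Set ℕ) ×ˢ
          {l : List ℕ | l.length ≤ N ∧ ∀ a ∈ l, a ∈ adomS X}) := by
      rintro ⟨r, args⟩ ⟨h1, h2, h3⟩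
      exact ⟨(r, args), ⟨h1, h2, fun a ha => h3 (by simp [Atom.vars, ha])⟩, rfl⟩
    refine Set.Finite.subset (Set.Finite.image _ ?_) hinj
    exact Set.Finite.prod (Th'.image (fun τ => τ.head.rel)).finite_toSet
      (list_bounded_finite _ (adomS_finite hX) N)
  exact Set.Finite.subset (hX.union hbigfin) hclosed


/-! #### Encodings -/

def atomEquiv : Atom ≃ ℕ × List ℕ where
  toFun A := (A.rel, A.args)
  invFun p := ⟨p.1, p.2⟩
  left_inv A := rfl
  right_inv p := rfl

instance : Encodable Atom := Encodable.ofEquiv _ atomEquiv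

def tgdEquiv : TGD ≃ List Atom × Atom where
  toFun τ := (τ.body, τ.head)
  invFun p := ⟨p.1, p.2⟩
  left_inv τ := rfl
  right_inv p := rfl

instance : Encodable TGD := Encodable.ofEquiv _ tgdEquiv

/-! #### Canonical body assignments -/

def sortedVars (τ : TGD) : List ℕ := τ.bodyVars.sort (· ≤ ·)

def cfun (τ : TGD) (l : List ℕ) : ℕ → ℕ := fun v => l.getD ((sortedVars τ).idxOf v) 0

def canonσ (τ : TGD) (σ : ℕ → ℕ) : List ℕ := (sortedVars τ).map σ

lemma cfun_canon {τ : TGD} {σ : ℕ → ℕ} {v : ℕ} (hv : v ∈ τ.bodyVars) :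
    cfun τ (canonσ τ σ) v = σ v := by
  have hv' : v ∈ sortedVars τ := (Finset.mem_sort _).2 hv
  have hlt : (sortedVars τ).idxOf v < (sortedVars τ).length :=
    List.idxOf_lt_length_iff.2 hv'
  have hlt' : (sortedVars τ).idxOf v < (canonσ τ σ).length := by
    simpa [canonσ] using hlt
  rw [cfun, List.getD_eq_getElem _ _ hlt']
  simp [canonσ, List.getElem_map, List.idxOf_get hlt]

def lmax (l : List ℕ) : ℕ := l.foldr max 0

lemma le_lmax_of_mem {l : List ℕ} {a : ℕ} (h : a ∈ l) : a ≤ lmax l := by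
  induction l with
  | nil => simp at h
  | cons b t ih =>
    rcases List.mem_cons.1 h with rfl | h
    · exact le_max_left _ _
    · exact le_trans (ih h) (le_max_right _ _)

lemma cfun_le_lmax (τ : TGD) (l : List ℕ) (v : ℕ) : cfun τ l v ≤ lmax l := by
  rw [cfun]
  by_cases h : (sortedVars τ).idxOf v < l.length
  · rw [List.getD_eq_getElem _ _ h]
    exact le_lmax_of_mem (List.getElem_mem _)
  · rw [List.getD_eq_default _ _ (le_of_not_gt h)]
    exact Nat.zero_le _

/-! #### Null codes for the canonical chase -/

def nullCode (ε : Bool) (B : ℕ) (t : TGD × List ℕ × ℕ) : ℕ :=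
  2 * (B + Nat.pair (Encodable.encode t) (lmax t.2.1) + 1) + ε.toNat

lemma lt_nullCode_B (ε : Bool) (B : ℕ) (t : TGD × List ℕ × ℕ) : B < nullCode ε B t := by
  unfold nullCode; omega

lemma lmax_lt_nullCode (ε : Bool) (B : ℕ) (t : TGD × List ℕ × ℕ) :
    lmax t.2.1 < nullCode ε B t := by
  have := Nat.right_le_pair (Encodable.encode t) (lmax t.2.1)
  unfold nullCode; omega

lemma cfun_lt_nullCode (ε : Bool) (B : ℕ) (τ : TGD) (l : List ℕ) (v y : ℕ) :
    cfun τ l v < nullCode ε B (τ, l, y) := by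
  exact lt_of_le_of_lt (cfun_le_lmax τ l v) (lmax_lt_nullCode ε B (τ, l, y))

lemma nullCode_mod_two (ε : Bool) (B : ℕ) (t : TGD × List ℕ × ℕ) :
    nullCode ε B t % 2 = ε.toNat := by
  unfold nullCode; cases ε <;> simp [Bool.toNat] <;> omega

lemma nullCode_inj {ε : Bool} {B : ℕ} {t t' : TGD × List ℕ × ℕ}
    (h : nullCode ε B t = nullCode ε B t') : t = t' := by
  unfold nullCode at h
  have hp : Nat.pair (Encodable.encode t) (lmax t.2.1) =
      Nat.pair (Encodable.encode t') (lmax t'.2.1) := by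
    cases ε <;> simp only [Bool.toNat_false, Bool.toNat_true] at h <;> omega
  exact Encodable.encode_injective (Nat.pair_eq_pair.1 hp).1

/-! #### The canonical chase as an inductive predicate -/

def chaseWit (ε : Bool) (B : ℕ) (τ : TGD) (l : List ℕ) : ℕ → ℕ :=
  fun v => if v ∈ τ.existVars then nullCode ε B (τ, l, v) else cfun τ l v

inductive Chase (Th : Finset TGD) (ε : Bool) (B : ℕ) (X : Set Fact) : Fact → Prop
  | base {F : Fact} : F ∈ X → Chase Th ε B X F
  | full {τ : TGD} {σ : ℕ → ℕ} : τ ∈ Th → τ.isFull →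
      (∀ A ∈ τ.body, Chase Th ε B X (A.rename σ)) → Chase Th ε B X (τ.head.rename σ)
  | nonfull {τ : TGD} (l : List ℕ) : τ ∈ Th → ¬τ.isFull →
      (∀ A ∈ τ.body, Chase Th ε B X (A.rename (cfun τ l))) →
      Chase Th ε B X (τ.head.rename (chaseWit ε B τ l))

lemma chase_subset (Th : Finset TGD) (ε : Bool) (B : ℕ) (X : Set Fact) :
    X ⊆ {F | Chase Th ε B X F} := fun _ h => Chase.base h

lemma chase_holds (Th : Finset TGD) (ε : Bool) (B : ℕ) (X : Set Fact) :
    ∀ τ ∈ Th, τ.holdsIn {F | Chase Th ε B X F} := by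
  intro τ hτ σ htrig
  by_cases hfull : τ.isFull
  · exact ⟨σ, fun _ _ => rfl, Chase.full hτ hfull htrig⟩
  · refine ⟨chaseWit ε B τ (canonσ τ σ), ?_, ?_⟩
    · intro v hv
      have : v ∉ τ.existVars := fun hc => TGD.exist_not_body hc hv
      simp only [chaseWit, if_neg this]
      exact cfun_canon hv
    · refine Chase.nonfull (canonσ τ σ) hτ hfull ?_
      intro A hA
      have : A.rename (cfun τ (canonσ τ σ)) = A.rename σ := by
        refine Atom.rename_congr (fun a ha => ?_)
        exact cfun_canon (TGD.mem_bodyVars.2 ⟨A, hA, ha⟩)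
      rw [this]; exact htrig A hA

lemma chase_vars {Th : Finset TGD} {ε : Bool} {B : ℕ} {X : Set Fact} {F : Fact}
    (h : Chase Th ε B X F) :
    ∀ a ∈ F.vars, a ∈ adomS X ∨ (B < a ∧ a % 2 = ε.toNat) := by
  induction h with
  | base hF => exact fun a ha => Or.inl (mem_adomS_of_mem hF ha)
  | full hτ hfull htrig ih =>
    intro a ha
    rw [Atom.vars_rename] at ha
    obtain ⟨x, hx, rfl⟩ := Finset.mem_image.1 ha
    obtain ⟨A, hA, hxA⟩ := TGD.mem_bodyVars.1 (hfull hx)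
    refine ih A hA _ ?_
    rw [Atom.vars_rename]; exact Finset.mem_image_of_mem _ hxA
  | nonfull l hτ hnf htrig ih =>
    rename_i τ
    intro a ha
    rw [Atom.vars_rename] at ha
    obtain ⟨x, hx, rfl⟩ := Finset.mem_image.1 ha
    rcases TGD.head_var_cases hx with hex | hbody
    · rw [chaseWit, if_pos hex]
      exact Or.inr ⟨lt_nullCode_B ε B (τ, l, x), nullCode_mod_two ε B (τ, l, x)⟩
    · rw [chaseWit, if_neg (fun hc => TGD.exist_not_body hc hbody)]
      obtain ⟨A, hA, hxA⟩ := TGD.mem_bodyVars.1 hbody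
      refine ih A hA _ ?_
      rw [Atom.vars_rename]; exact Finset.mem_image_of_mem _ hxA

lemma chase_complete {Th : Finset TGD} {ε : Bool} {B : ℕ} {X : Set Fact} {F : Fact}
    (h : entailsS Th X F) : Chase Th ε B X F :=
  h {F | Chase Th ε B X F} (chase_subset Th ε B X) (chase_holds Th ε B X)

/-! #### The universal homomorphism out of the canonical chase -/

noncomputable def homCore (Th : Finset TGD) (K : Set Fact)
    (hK : ∀ τ ∈ Th, τ.holdsIn K) (t : TGD × List ℕ × ℕ) (ht : t.1 ∈ Th)
    (σ0 : ℕ → ℕ) : ℕ :=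
  if htrig : ∀ A ∈ t.1.body, A.rename σ0 ∈ K then
    Classical.choose (hK t.1 ht σ0 htrig) t.2.2
  else 0

lemma homCore_congr {Th : Finset TGD} {K : Set Fact} {hK : ∀ τ ∈ Th, τ.holdsIn K}
    {t1 t2 : TGD × List ℕ × ℕ} {h1 : t1.1 ∈ Th} {h2 : t2.1 ∈ Th} {σ1 σ2 : ℕ → ℕ}
    (ht : t1 = t2) (hσ : σ1 = σ2) :
    homCore Th K hK t1 h1 σ1 = homCore Th K hK t2 h2 σ2 := by
  subst ht; subst hσ; rfl

noncomputable def homN (Th : Finset TGD) (ε : Bool) (B : ℕ) (K : Set Fact)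
    (hK : ∀ τ ∈ Th, τ.holdsIn K) (r : ℕ → ℕ) : ℕ → ℕ → ℕ
  | 0, a => r a
  | (fuel+1), a =>
      if h : ∃ t : TGD × List ℕ × ℕ, t.1 ∈ Th ∧ a = nullCode ε B t then
        homCore Th K hK (Classical.choose h) (Classical.choose_spec h).1
          (fun v => homN Th ε B K hK r fuel
            (cfun (Classical.choose h).1 (Classical.choose h).2.1 v))
      else r a

noncomputable def homFun (Th : Finset TGD) (ε : Bool) (B : ℕ) (K : Set Fact)
    (hK : ∀ τ ∈ Th, τ.holdsIn K) (r : ℕ → ℕ) : ℕ → ℕ :=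
  fun a => homN Th ε B K hK r (a + 1) a

lemma homN_stable (Th : Finset TGD) (ε : Bool) (B : ℕ) (K : Set Fact)
    (hK : ∀ τ ∈ Th, τ.holdsIn K) (r : ℕ → ℕ) :
    ∀ a fuel, a < fuel → homN Th ε B K hK r fuel a = homFun Th ε B K hK r a := by
  intro a
  induction a using Nat.strong_induction_on with
  | _ a ih =>
    intro fuel hfuel
    obtain ⟨f, rfl⟩ : ∃ f, fuel = f + 1 := ⟨fuel - 1, by omega⟩
    rw [homFun]
    show homN Th ε B K hK r (f+1) a = homN Th ε B K hK r (a+1) a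
    simp only [homN]
    by_cases h : ∃ t : TGD × List ℕ × ℕ, t.1 ∈ Th ∧ a = nullCode ε B t
    · rw [dif_pos h, dif_pos h]
      have hcfun : ∀ v, cfun (Classical.choose h).1 (Classical.choose h).2.1 v < a := by
        intro v
        have hspec := (Classical.choose_spec h).2
        calc cfun (Classical.choose h).1 (Classical.choose h).2.1 v
            ≤ lmax (Classical.choose h).2.1 := cfun_le_lmax _ _ _
          _ < nullCode ε B (Classical.choose h) := lmax_lt_nullCode _ _ _
          _ = a := hspec.symm
      refine homCore_congr rfl ?_
      funext v
      have h1 := hcfun v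
      rw [ih _ h1 f (by omega), ih _ h1 a h1]
    · rw [dif_neg h, dif_neg h]

lemma homFun_eq (Th : Finset TGD) (ε : Bool) (B : ℕ) (K : Set Fact)
    (hK : ∀ τ ∈ Th, τ.holdsIn K) (r : ℕ → ℕ) (a : ℕ) :
    homFun Th ε B K hK r a =
      if h : ∃ t : TGD × List ℕ × ℕ, t.1 ∈ Th ∧ a = nullCode ε B t then
        homCore Th K hK (Classical.choose h) (Classical.choose_spec h).1
          (fun v => homFun Th ε B K hK r
            (cfun (Classical.choose h).1 (Classical.choose h).2.1 v))
      else r a := by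
  conv_lhs => rw [homFun]
  show homN Th ε B K hK r (a+1) a = _
  simp only [homN]
  by_cases h : ∃ t : TGD × List ℕ × ℕ, t.1 ∈ Th ∧ a = nullCode ε B t
  · rw [dif_pos h, dif_pos h]
    have hcfun : ∀ v, cfun (Classical.choose h).1 (Classical.choose h).2.1 v < a := by
      intro v
      have hspec := (Classical.choose_spec h).2
      calc cfun (Classical.choose h).1 (Classical.choose h).2.1 v
          ≤ lmax (Classical.choose h).2.1 := cfun_le_lmax _ _ _
        _ < nullCode ε B (Classical.choose h) := lmax_lt_nullCode _ _ _
        _ = a := hspec.symm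
    refine homCore_congr rfl ?_
    funext v
    exact homN_stable Th ε B K hK r _ a (hcfun v)
  · rw [dif_neg h, dif_neg h]

lemma homFun_of_le {Th : Finset TGD} {ε : Bool} {B : ℕ} {K : Set Fact}
    {hK : ∀ τ ∈ Th, τ.holdsIn K} {r : ℕ → ℕ} {a : ℕ} (ha : a ≤ B) :
    homFun Th ε B K hK r a = r a := by
  rw [homFun_eq]
  rw [dif_neg]
  rintro ⟨t, -, rfl⟩
  exact absurd (lt_nullCode_B ε B t) (by omega)

lemma homFun_null {Th : Finset TGD} {ε : Bool} {B : ℕ} {K : Set Fact}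
    {hK : ∀ τ ∈ Th, τ.holdsIn K} {r : ℕ → ℕ} {τ : TGD} {l : List ℕ} {y : ℕ}
    (hτ : τ ∈ Th)
    (htrig : ∀ A ∈ τ.body, A.rename (fun v => homFun Th ε B K hK r (cfun τ l v)) ∈ K) :
    homFun Th ε B K hK r (nullCode ε B (τ, l, y)) =
      Classical.choose (hK τ hτ (fun v => homFun Th ε B K hK r (cfun τ l v)) htrig) y := by
  rw [homFun_eq]
  have h : ∃ t : TGD × List ℕ × ℕ, t.1 ∈ Th ∧ nullCode ε B (τ, l, y) = nullCode ε B t :=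
    ⟨(τ, l, y), hτ, rfl⟩
  rw [dif_pos h]
  have hch : Classical.choose h = (τ, l, y) := (nullCode_inj (Classical.choose_spec h).2).symm
  have hσ : (fun v => homFun Th ε B K hK r
        (cfun (Classical.choose h).1 (Classical.choose h).2.1 v)) =
      (fun v => homFun Th ε B K hK r (cfun τ l v)) := by rw [hch]
  rw [homCore_congr (h1 := (Classical.choose_spec h).1) (h2 := hτ) hch hσ]
  simp only [homCore]
  rw [dif_pos htrig]

lemma chase_hom {Th : Finset TGD} {ε : Bool} {B : ℕ} {X K : Set Fact}
    (hK : ∀ τ ∈ Th, τ.holdsIn K) (r : ℕ → ℕ)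
    (hB : ∀ a ∈ adomS X, a ≤ B) (hr : ∀ F ∈ X, F.rename r ∈ K) :
    ∀ F, Chase Th ε B X F → F.rename (homFun Th ε B K hK r) ∈ K := by
  intro F hF
  induction hF with
  | base hFX =>
    have : _root_.GTGDPaper.Atom.rename (homFun Th ε B K hK r) _ = Atom.rename r _ :=
      Atom.rename_congr (fun a ha => homFun_of_le (hB a (mem_adomS_of_mem hFX ha)))
    rw [this]
    exact hr _ hFX
  | full hτ hfull htrig ih =>
    rename_i τ σ
    rw [Atom.rename_rename]
    have htrig' : ∀ A ∈ τ.body, A.rename (homFun Th ε B K hK r ∘ σ) ∈ K := by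
      intro A hA
      have := ih A hA
      rwa [Atom.rename_rename] at this
    obtain ⟨σ'', hagree, hmem⟩ := hK τ hτ _ htrig'
    have : τ.head.rename (homFun Th ε B K hK r ∘ σ) = τ.head.rename σ'' :=
      Atom.rename_congr (fun a ha => (hagree a (hfull ha)).symm)
    rw [this]; exact hmem
  | nonfull l hτ hnf htrig ih =>
    rename_i τ
    rw [Atom.rename_rename]
    have htrig' : ∀ A ∈ τ.body,
        A.rename (fun v => homFun Th ε B K hK r (cfun τ l v)) ∈ K := by
      intro A hA
      have := ih A hA
      rwa [Atom.rename_rename] at this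
    have hspec := Classical.choose_spec (hK τ hτ _ htrig')
    have : τ.head.rename (homFun Th ε B K hK r ∘ chaseWit ε B τ l) =
        τ.head.rename (Classical.choose (hK τ hτ _ htrig')) := by
      refine Atom.rename_congr (fun x hx => ?_)
      rcases TGD.head_var_cases hx with hex | hbody
      · show homFun Th ε B K hK r (chaseWit ε B τ l x) = _
        rw [chaseWit, if_pos hex]
        exact homFun_null hτ htrig'
      · show homFun Th ε B K hK r (chaseWit ε B τ l x) = _
        rw [chaseWit, if_neg (fun hc => TGD.exist_not_body hc hbody)]
        exact (hspec.1 x hbody).symm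
    rw [this]; exact hspec.2

/-- Soundness of the canonical chase for facts over the active domain of the base. -/
lemma chase_sound {Th : Finset TGD} {ε : Bool} {B : ℕ} {X : Set Fact} {F : Fact}
    (hch : Chase Th ε B X F) (hvars : ∀ a ∈ F.vars, a ∈ adomS X)
    (hB : ∀ a ∈ adomS X, a ≤ B) : entailsS Th X F := by
  intro J hXJ hTh
  have h := chase_hom (ε := ε) (B := B) (X := X) hTh id hB
    (fun G hG => by rw [Atom.rename_id]; exact hXJ hG) F hch
  have heq : F.rename (homFun Th ε B J hTh id) = F.rename id :=
    Atom.rename_congr (fun a ha => homFun_of_le (hB a (hvars a ha)))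
  rwa [heq, Atom.rename_id] at h


/-! #### Saturation of newly created node labels -/

section NodeSat

variable {Th Th' : Finset TGD} {S' : Finset ℕ} {P : Set Fact} {τ : TGD} {σ σ' : ℕ → ℕ}

/-- Values of body variables lie in the active domain of the trigger instance. -/
lemma bodyVar_val_mem (htrig : ∀ A ∈ τ.body, A.rename σ ∈ P) {x : ℕ}
    (hx : x ∈ τ.bodyVars) : σ x ∈ adomS P := by
  obtain ⟨A, hA, hxA⟩ := TGD.mem_bodyVars.1 hx
  refine mem_adomS_of_mem (htrig A hA) ?_
  rw [Atom.vars_rename]; exact Finset.mem_image_of_mem _ hxA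

/-- Classification of the values of the new head fact. -/
lemma hvar_cases (htrig : ∀ A ∈ τ.body, A.rename σ ∈ P)
    (hext : ∀ x ∈ τ.bodyVars, σ' x = σ x) :
    ∀ a ∈ (τ.head.rename σ').vars,
      (∃ y ∈ τ.existVars, σ' y = a) ∨ ((∃ x ∈ τ.exported, σ' x = a) ∧ a ∈ adomS P) := by
  intro a ha
  rw [Atom.vars_rename] at ha
  obtain ⟨x, hx, rfl⟩ := Finset.mem_image.1 ha
  rcases TGD.head_var_cases hx with hex | hbody
  · exact Or.inl ⟨x, hex, rfl⟩
  · refine Or.inr ⟨⟨x, Finset.mem_inter.2 ⟨hx, hbody⟩, rfl⟩, ?_⟩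
    rw [hext x hbody]
    exact bodyVar_val_mem htrig hbody

lemma adomS_insert_inh (hP : True) :
    adomS (insert (τ.head.rename σ')
        {G : Fact | G ∈ P ∧ G.vars ⊆ (τ.head.rename σ').vars}) ⊆
      ↑(τ.head.rename σ').vars := by
  rintro a ⟨F, hF, ha⟩
  rcases hF with rfl | ⟨-, hsub⟩
  · exact_mod_cast ha
  · exact_mod_cast hsub ha

/-- Null elimination: a fact entailed from the child core whose values avoid the
fresh nulls is already entailed from the parent label. -/
lemma null_elim (hPfin : P.Finite)
    (hτ : τ ∈ Th) (htrig : ∀ A ∈ τ.body, A.rename σ ∈ P)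
    (hext : ∀ x ∈ τ.bodyVars, σ' x = σ x)
    (hfresh : ∀ y ∈ τ.existVars, σ' y ∉ adomS P)
    (hinj : Set.InjOn σ' ↑τ.existVars)
    {G : Fact}
    (hG : entailsS Th (insert (τ.head.rename σ')
      {G : Fact | G ∈ P ∧ G.vars ⊆ (τ.head.rename σ').vars}) G)
    (hGvars : ↑G.vars ⊆ adomS P) :
    entailsS Th P G := by
  classical
  set H : Fact := τ.head.rename σ' with hH
  set X : Set Fact := insert H {G : Fact | G ∈ P ∧ G.vars ⊆ H.vars} with hX
  intro J hPJ hTh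
  -- the witness substitution in J
  obtain ⟨σ'', hagree, hmem⟩ := hTh τ hτ σ (fun A hA => hPJ (htrig A hA))
  -- a bound on the relevant active domains
  have hXfin : X.Finite := by
    refine Set.Finite.insert _ (hPfin.subset ?_)
    intro G hG; exact hG.1
  have hfin : (adomS X ∪ adomS P).Finite := (adomS_finite hXfin).union (adomS_finite hPfin)
  obtain ⟨B, hB⟩ := hfin.bddAbove
  -- the null-elimination map
  set r : ℕ → ℕ := fun a => if h : ∃ y, y ∈ τ.existVars ∧ σ' y = a then σ'' h.choose else a
    with hr
  have hr_dom : ∀ a ∈ adomS P, r a = a := by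
    intro a ha
    rw [hr]
    refine dif_neg ?_
    rintro ⟨y, hy, rfl⟩
    exact hfresh y hy ha
  have hr_null : ∀ y ∈ τ.existVars, r (σ' y) = σ'' y := by
    intro y hy
    have hex : ∃ y', y' ∈ τ.existVars ∧ σ' y' = σ' y := ⟨y, hy, rfl⟩
    rw [hr]
    simp only [dif_pos hex]
    have hspec := hex.choose_spec
    have : hex.choose = y := hinj hspec.1 hy hspec.2
    rw [this]
  -- the image of the core under `r` lies in `J`
  have hrX : ∀ F ∈ X, F.rename r ∈ J := by
    intro F hF
    rcases hF with rfl | ⟨hFP, hFsub⟩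
    · have : H.rename r = τ.head.rename σ'' := by
        rw [hH, Atom.rename_rename]
        refine Atom.rename_congr (fun x hx => ?_)
        rcases TGD.head_var_cases hx with hex | hbody
        · exact hr_null x hex
        · show r (σ' x) = σ'' x
          rw [hext x hbody, hr_dom _ (bodyVar_val_mem htrig hbody), hagree x hbody]
      rw [this]; exact hmem
    · have : F.rename r = F := by
        have : F.rename r = F.rename id :=
          Atom.rename_congr (fun a ha => hr_dom a (mem_adomS_of_mem hFP ha))
        rw [this, Atom.rename_id]
      rw [this]; exact hPJ hFP
  -- push `G` through the chase homomorphism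
  have hch : Chase Th false B X G := chase_complete hG
  have hBX : ∀ a ∈ adomS X, a ≤ B := fun a ha => hB (Set.mem_union_left _ ha)
  have := chase_hom (ε := false) hTh r hBX hrX G hch
  have heq : G.rename (homFun Th false B J hTh r) = G.rename r :=
    Atom.rename_congr (fun a ha => homFun_of_le (hB (Set.mem_union_right _ (hGvars ha))))
  have heq2 : G.rename r = G := by
    have : G.rename r = G.rename id :=
      Atom.rename_congr (fun a ha => hr_dom a (hGvars ha))
    rw [this, Atom.rename_id]
  rwa [heq, heq2] at this

/-- Fresh-null-free entailed facts belong to the inherited part. -/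
lemma freshfree_mem (hPfin : P.Finite)
    (hPsat : ∀ F : Fact, ↑F.vars ⊆ adomS P → entailsS Th P F → F ∈ P)
    (hτ : τ ∈ Th) (htrig : ∀ A ∈ τ.body, A.rename σ ∈ P)
    (hext : ∀ x ∈ τ.bodyVars, σ' x = σ x)
    (hfresh : ∀ y ∈ τ.existVars, σ' y ∉ adomS P)
    (hinj : Set.InjOn σ' ↑τ.existVars)
    {G : Fact}
    (hG : entailsS Th (insert (τ.head.rename σ')
      {G : Fact | G ∈ P ∧ G.vars ⊆ (τ.head.rename σ').vars}) G)
    (hGvars : G.vars ⊆ (τ.head.rename σ').vars)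
    (hnz : ∀ y ∈ τ.existVars, σ' y ∉ G.vars) :
    G ∈ P ∧ G.vars ⊆ (τ.head.rename σ').vars := by
  have hGP : ↑G.vars ⊆ adomS P := by
    intro a ha
    have ha' : a ∈ (τ.head.rename σ').vars := hGvars (by exact_mod_cast ha)
    rcases hvar_cases htrig hext a ha' with ⟨y, hy, rfl⟩ | ⟨-, hmem⟩
    · exact absurd (by exact_mod_cast ha) (hnz y hy)
    · exact hmem
  exact ⟨hPsat G hGP (null_elim hPfin hτ htrig hext hfresh hinj hG hGP), hGvars⟩

end NodeSat


section KeyClaim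

variable {Th Th' : Finset TGD} {S' : Finset ℕ} {P : Set Fact} {τ : TGD} {σ σ' : ℕ → ℕ}

lemma exist_mem_head {τ : TGD} {y : ℕ} (h : y ∈ τ.existVars) : y ∈ τ.head.vars :=
  (Finset.mem_sdiff.1 h).1

/-- The key claim: a fact entailed from the child core that mentions a fresh null is
already entailed from the childish part of the core. -/
lemma key_claim (hobeys : ∀ γ ∈ Th, γ.obeys S') (hPfin : P.Finite)
    (hPsat : ∀ F : Fact, ↑F.vars ⊆ adomS P → entailsS Th P F → F ∈ P)
    (hτ : τ ∈ Th) (htrig : ∀ A ∈ τ.body, A.rename σ ∈ P)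
    (hext : ∀ x ∈ τ.bodyVars, σ' x = σ x)
    (hfresh : ∀ y ∈ τ.existVars, σ' y ∉ adomS P)
    (hinj : Set.InjOn σ' ↑τ.existVars)
    {F : Fact}
    (hF : entailsS Th (insert (τ.head.rename σ')
      {G : Fact | G ∈ P ∧ G.vars ⊆ (τ.head.rename σ').vars}) F)
    (hFvars : F.vars ⊆ (τ.head.rename σ').vars)
    (hNZ : ∃ y ∈ τ.existVars, σ' y ∈ F.vars) :
    entailsS Th (insert (τ.head.rename σ')
      {G : Fact | G ∈ P ∧ G.rel ∈ S' ∧ G.vars ⊆ (τ.head.rename σ').vars}) F := by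
  classical
  set H : Fact := τ.head.rename σ' with hH
  set nInh : Set Fact := {G : Fact | G ∈ P ∧ G.vars ⊆ H.vars} with hInh
  set X : Set Fact := insert H nInh with hX
  set Cset : Set Fact := insert H {G : Fact | G ∈ P ∧ G.rel ∈ S' ∧ G.vars ⊆ H.vars}
    with hCs
  -- a bound on all relevant values
  have hXfin : X.Finite := Set.Finite.insert _ (hPfin.subset (fun G hG => hG.1))
  have hfin : (adomS X ∪ adomS P).Finite := (adomS_finite hXfin).union (adomS_finite hPfin)
  obtain ⟨B, hB⟩ := hfin.bddAbove
  have hBX : ∀ a ∈ adomS X, a ≤ B := fun a ha => hB (Set.mem_union_left _ ha)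
  have hBP : ∀ a ∈ adomS P, a ≤ B := fun a ha => hB (Set.mem_union_right _ ha)
  -- basic inclusions
  have hCsub : Cset ⊆ X := by
    intro G hG
    rcases hG with rfl | ⟨h1, h2, h3⟩
    · exact Set.mem_insert _ _
    · exact Set.mem_insert_of_mem _ ⟨h1, h3⟩
  have hIsub : nInh ⊆ X := fun G hG => Set.mem_insert_of_mem _ hG
  have hadomX : adomS X ⊆ ↑H.vars := by
    rintro a ⟨G, hG, ha⟩
    rcases hG with rfl | ⟨-, hsub⟩
    · exact_mod_cast ha
    · exact_mod_cast hsub ha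
  have hadomC : adomS Cset ⊆ ↑H.vars := fun a ha => hadomX (adomS_mono hCsub ha)
  have hadomI : adomS nInh ⊆ ↑H.vars := fun a ha => hadomX (adomS_mono hIsub ha)
  have hadomIP : adomS nInh ⊆ adomS P := by
    rintro a ⟨G, hG, ha⟩; exact mem_adomS_of_mem hG.1 ha
  have hHX : ↑H.vars ⊆ adomS X := fun a ha =>
    mem_adomS_of_mem (Set.mem_insert _ _) (by exact_mod_cast ha)
  have hHC : ↑H.vars ⊆ adomS Cset := fun a ha =>
    mem_adomS_of_mem (Set.mem_insert _ _) (by exact_mod_cast ha)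
  have hBH : ∀ a ∈ H.vars, a ≤ B := fun a ha => hBX a (hHX (by exact_mod_cast ha))
  have hBC : ∀ a ∈ adomS Cset, a ≤ B := fun a ha => hBH a (by exact_mod_cast hadomC ha)
  have hBI : ∀ a ∈ adomS nInh, a ≤ B := fun a ha => hBP a (hadomIP ha)
  -- the two canonical chases
  set MC : Set Fact := {G : Fact | Chase Th false B Cset G} with hMC
  set MY : Set Fact := {G : Fact | Chase Th true B nInh G} with hMY
  set M : Set Fact := MC ∪ MY with hM
  -- region lemmas
  have rC : ∀ G ∈ MC, ∀ a ∈ G.vars, a ∈ adomS Cset ∨ (B < a ∧ a % 2 = 0) := by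
    intro G hG a ha
    have := chase_vars hG a ha
    simpa using this
  have rY : ∀ G ∈ MY, ∀ a ∈ G.vars, a ∈ adomS nInh ∨ (B < a ∧ a % 2 = 1) := by
    intro G hG a ha
    have := chase_vars hG a ha
    simpa using this
  -- transfer lemmas
  have tCP : ∀ G ∈ MC, ↑G.vars ⊆ adomS P → G ∈ nInh := by
    intro G hG hsub
    have hvC : ∀ a ∈ G.vars, a ∈ adomS Cset := by
      intro a ha
      rcases rC G hG a ha with h | ⟨h1, -⟩
      · exact h
      · exact absurd (hBP a (hsub ha)) (by omega)
    have hent : entailsS Th X G :=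
      entailsS_mono hCsub (chase_sound hG (fun a ha => hvC a ha) hBC)
    have hGH : G.vars ⊆ H.vars := fun a ha => by exact_mod_cast hadomC (hvC a ha)
    have hnz : ∀ y ∈ τ.existVars, σ' y ∉ G.vars := by
      intro y hy hc
      exact hfresh y hy (hsub hc)
    exact freshfree_mem hPfin hPsat hτ htrig hext hfresh hinj hent hGH hnz
  have tIP : ∀ G ∈ MY, ↑G.vars ⊆ adomS nInh → G ∈ nInh := by
    intro G hG hsub
    have hent : entailsS Th X G :=
      entailsS_mono hIsub (chase_sound hG (fun a ha => hsub ha) hBI)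
    have hGH : G.vars ⊆ H.vars := fun a ha => by exact_mod_cast hadomI (hsub ha)
    have hnz : ∀ y ∈ τ.existVars, σ' y ∉ G.vars := by
      intro y hy hc
      exact hfresh y hy (hadomIP (hsub hc))
    exact freshfree_mem hPfin hPsat hτ htrig hext hfresh hinj hent hGH hnz
  -- M is a model of Th
  have hMTh : ∀ γ ∈ Th, γ.holdsIn M := by
    intro γ hγ ρ htrigM
    obtain ⟨A', ⟨hA'mem, hA'g⟩, hsides⟩ := hobeys γ hγ
    have hbsub : ∀ Bd ∈ γ.body, ∀ a ∈ (Bd.rename ρ).vars, a ∈ (A'.rename ρ).vars := by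
      intro Bd hBd a ha
      rw [Atom.vars_rename] at ha ⊢
      obtain ⟨x, hx, rfl⟩ := Finset.mem_image.1 ha
      exact Finset.mem_image_of_mem _ (hA'g (TGD.mem_bodyVars.2 ⟨Bd, hBd, hx⟩))
    have hcomp : (∀ Bd ∈ γ.body, Bd.rename ρ ∈ MC) ∨ (∀ Bd ∈ γ.body, Bd.rename ρ ∈ MY) := by
      by_cases hD1 : ∃ a ∈ (A'.rename ρ).vars, B < a ∧ a % 2 = 1
      · right
        obtain ⟨a0, ha0, hB0, hodd0⟩ := hD1
        have hgfY : A'.rename ρ ∈ MY := by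
          rcases htrigM A' hA'mem with hMCm | hMYm
          · rcases rC _ hMCm a0 ha0 with hmem | ⟨-, heven⟩
            · exact absurd (hBC a0 hmem) (by omega)
            · omega
          · exact hMYm
        intro Bd hBd
        rcases htrigM Bd hBd with hMCm | hMYm
        · have hsubI : ↑(Bd.rename ρ).vars ⊆ adomS nInh := by
            intro a ha
            have ha' : a ∈ (Bd.rename ρ).vars := by exact_mod_cast ha
            have haf : a ∈ (A'.rename ρ).vars := hbsub Bd hBd a ha'
            rcases rY _ hgfY a haf with h | ⟨hBlt, hodd⟩
            · exact h
            · rcases rC _ hMCm a ha' with h2 | ⟨-, heven⟩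
              · exact absurd (hBC a h2) (by omega)
              · omega
          exact Chase.base (tCP _ hMCm (fun a ha => hadomIP (hsubI ha)))
        · exact hMYm
      · by_cases hD0 : ∃ a ∈ (A'.rename ρ).vars,
            (B < a ∧ a % 2 = 0) ∨ (∃ y ∈ τ.existVars, σ' y = a)
        · left
          obtain ⟨a0, ha0, hcase⟩ := hD0
          have hgfC : A'.rename ρ ∈ MC := by
            rcases htrigM A' hA'mem with hMCm | hMYm
            · exact hMCm
            · exfalso
              rcases rY _ hMYm a0 ha0 with hmem | ⟨hBlt, hodd⟩
              · rcases hcase with ⟨hB0, -⟩ | ⟨y, hy, rfl⟩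
                · exact absurd (hBI a0 hmem) (by omega)
                · exact hfresh y hy (hadomIP hmem)
              · rcases hcase with ⟨-, heven⟩ | ⟨y, hy, rfl⟩
                · omega
                · refine absurd (hBH (σ' y) ?_) (by omega)
                  rw [hH, Atom.vars_rename]
                  exact Finset.mem_image_of_mem _ (exist_mem_head hy)
          intro Bd hBd
          rcases htrigM Bd hBd with hMCm | hMYm
          · exact hMCm
          · -- the fact lies in the side chase; transfer it
            have hsubI : ↑(Bd.rename ρ).vars ⊆ adomS nInh := by
              intro a ha
              have ha' : a ∈ (Bd.rename ρ).vars := by exact_mod_cast ha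
              have haf : a ∈ (A'.rename ρ).vars := hbsub Bd hBd a ha'
              rcases rY _ hMYm a ha' with h | ⟨hBlt, hodd⟩
              · exact h
              · rcases rC _ hgfC a haf with h2 | ⟨-, heven⟩
                · exact absurd (hBC a h2) (by omega)
                · omega
            have hmemI : Bd.rename ρ ∈ nInh := tIP _ hMYm hsubI
            by_cases hBdA : Bd = A'
            · subst hBdA; exact hgfC
            · have hrel : (Bd.rename ρ).rel ∈ S' := by
                rw [Atom.rel_rename]
                rcases hsides Bd hBd with h | h
                · exact absurd h hBdA
                · exact h
              exact Chase.base (Set.mem_insert_of_mem _ ⟨hmemI.1, hrel, hmemI.2⟩)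
        · right
          intro Bd hBd
          rcases htrigM Bd hBd with hMCm | hMYm
          · have hsubP : ↑(Bd.rename ρ).vars ⊆ adomS P := by
              intro a ha
              have ha' : a ∈ (Bd.rename ρ).vars := by exact_mod_cast ha
              have haf : a ∈ (A'.rename ρ).vars := hbsub Bd hBd a ha'
              rcases rC _ hMCm a ha' with h | ⟨hBlt, heven⟩
              · have haH : a ∈ H.vars := by exact_mod_cast hadomC h
                rcases hvar_cases htrig hext a haH with ⟨y, hy, rfl⟩ | ⟨-, hmem⟩
                · exact absurd ⟨_, haf, Or.inr ⟨y, hy, rfl⟩⟩ hD0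
                · exact hmem
              · exact absurd ⟨_, haf, Or.inl ⟨hBlt, heven⟩⟩ hD0
            exact Chase.base (tCP _ hMCm hsubP)
          · exact hMYm
    rcases hcomp with h | h
    · obtain ⟨ρ', h1, h2⟩ := chase_holds Th false B Cset γ hγ ρ h
      exact ⟨ρ', h1, Or.inl h2⟩
    · obtain ⟨ρ', h1, h2⟩ := chase_holds Th true B nInh γ hγ ρ h
      exact ⟨ρ', h1, Or.inr h2⟩
  -- F lies in M, in fact in the childish chase
  have hXM : X ⊆ M := by
    intro G hG
    rcases hG with rfl | hG
    · exact Or.inl (Chase.base (Set.mem_insert _ _))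
    · exact Or.inr (Chase.base hG)
  have hFM : F ∈ M := hF M hXM hMTh
  have hFMC : F ∈ MC := by
    rcases hFM with h | h
    · exact h
    · exfalso
      obtain ⟨y, hy, hyF⟩ := hNZ
      rcases rY _ h _ hyF with hmem | ⟨hBlt, -⟩
      · exact hfresh y hy (hadomIP hmem)
      · refine absurd (hBH (σ' y) ?_) (by omega)
        rw [hH, Atom.vars_rename]
        exact Finset.mem_image_of_mem _ (exist_mem_head hy)
  exact chase_sound hFMC (fun a ha => hHC (by exact_mod_cast hFvars ha)) hBC

end KeyClaim


section NewNode

variable {Th Th' : Finset TGD} {S' : Finset ℕ} {P : Set Fact} {τ : TGD} {σ σ' : ℕ → ℕ}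

lemma min'_congr_eq {s t : Finset ℕ} (h : s = t) (hs : s.Nonempty) (ht : t.Nonempty) :
    s.min' hs = t.min' ht := by subst h; rfl

/-- The new head fact is an isomorphic copy of the head of some GTGD of `Th`
(using homomorphism-closure to identify exported variables). -/
lemma head_iso (hhc : homClosed Th) (hτ : τ ∈ Th)
    (htrig : ∀ A ∈ τ.body, A.rename σ ∈ P)
    (hext : ∀ x ∈ τ.bodyVars, σ' x = σ x)
    (hfresh : ∀ y ∈ τ.existVars, σ' y ∉ adomS P)
    (hinj : Set.InjOn σ' ↑τ.existVars) :
    ∃ γ ∈ Th, atomIso γ.head (τ.head.rename σ') := by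
  classical
  set h : ℕ → ℕ := fun v =>
    if hv : v ∈ τ.exported then
      (τ.exported.filter (fun w => σ' w = σ' v)).min'
        ⟨v, Finset.mem_filter.2 ⟨hv, rfl⟩⟩
    else v with hhdef
  have hmem : ∀ v ∈ τ.exported, h v ∈ τ.exported ∧ σ' (h v) = σ' v := by
    intro v hv
    have := Finset.min'_mem (τ.exported.filter (fun w => σ' w = σ' v))
      ⟨v, Finset.mem_filter.2 ⟨hv, rfl⟩⟩
    have h2 := Finset.mem_filter.1 this
    constructor
    · rw [hhdef]; simp only [dif_pos hv]; exact h2.1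
    · rw [hhdef]; simp only [dif_pos hv]; exact h2.2
  refine ⟨τ.renameExported h, hhc τ hτ h (fun v hv => (hmem v hv).1), σ', ?_, ?_⟩
  · -- injectivity on the variables of the renamed head
    have hvars : (τ.renameExported h).head.vars =
        τ.head.vars.image (fun v => if v ∈ τ.exported then h v else v) := by
      show ((Atom.rename fun v => if v ∈ τ.exported then h v else v) τ.head).vars = _
      rw [Atom.vars_rename]
    intro a ha b hb heq
    rw [hvars] at ha hb
    simp only [Finset.coe_image, Set.mem_image, Finset.mem_coe] at ha hb
    obtain ⟨x, hx, rfl⟩ := ha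
    obtain ⟨y, hy, rfl⟩ := hb
    have hval : ∀ z ∈ τ.head.vars, z ∉ τ.exported → z ∈ τ.existVars := by
      intro z hz hne
      refine Finset.mem_sdiff.2 ⟨hz, fun hbz => hne (Finset.mem_inter.2 ⟨hz, hbz⟩)⟩
    have hexval : ∀ z ∈ τ.exported, σ' z ∈ adomS P := by
      intro z hz
      have hzb : z ∈ τ.bodyVars := Finset.mem_inter.1 hz |>.2
      rw [hext z hzb]
      exact bodyVar_val_mem htrig hzb
    by_cases hxe : x ∈ τ.exported <;> by_cases hye : y ∈ τ.exported
    · -- both exported: both are canonical representatives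
      simp only [if_pos hxe, if_pos hye] at heq ⊢
      have hx2 := hmem x hxe
      have hy2 := hmem y hye
      have hσ : σ' x = σ' y := by rw [← hx2.2, ← hy2.2, heq]
      have hset : τ.exported.filter (fun w => σ' w = σ' x) =
          τ.exported.filter (fun w => σ' w = σ' y) := by
        refine Finset.filter_congr (fun w _ => ?_)
        rw [hσ]
      rw [hhdef]
      simp only [dif_pos hxe, dif_pos hye]
      exact min'_congr_eq hset _ _
    · exfalso
      simp only [if_pos hxe, if_neg hye] at heq
      have h1 : σ' (h x) ∈ adomS P := by
        rw [(hmem x hxe).2]; exact hexval x hxe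
      have h2 : σ' y ∉ adomS P := hfresh y (hval y hy hye)
      rw [heq] at h1
      exact h2 h1
    · exfalso
      simp only [if_neg hxe, if_pos hye] at heq
      have h1 : σ' (h y) ∈ adomS P := by
        rw [(hmem y hye).2]; exact hexval y hye
      have h2 : σ' x ∉ adomS P := hfresh x (hval x hx hxe)
      rw [← heq] at h1
      exact h2 h1
    · simp only [if_neg hxe, if_neg hye] at heq ⊢
      exact hinj (by exact_mod_cast hval x hx hxe) (by exact_mod_cast hval y hy hye) heq
  · -- the head fact is the renamed head
    show τ.head.rename σ' =
      ((Atom.rename fun v => if v ∈ τ.exported then h v else v) τ.head).rename σ'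
    rw [Atom.rename_rename]
    refine Atom.rename_congr (fun x hx => ?_)
    show σ' x = σ' (if x ∈ τ.exported then h x else x)
    by_cases hxe : x ∈ τ.exported
    · rw [if_pos hxe, (hmem x hxe).2]
    · rw [if_neg hxe]

/-- Fact-saturation of a freshly created node label. -/
lemma newNodeSat (hst : stronglyObeys Th S')
    (hsat : childishSaturation Th S' (maxWidth Th) Th')
    (hPfin : P.Finite)
    (hPsat : ∀ F : Fact, ↑F.vars ⊆ adomS P → entailsS Th P F → F ∈ P)
    (hτ : τ ∈ Th) (hnf : ¬ τ.isFull)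
    (htrig : ∀ A ∈ τ.body, A.rename σ ∈ P)
    (hext : ∀ x ∈ τ.bodyVars, σ' x = σ x)
    (hfresh : ∀ y ∈ τ.existVars, σ' y ∉ adomS P)
    (hinj : Set.InjOn σ' ↑τ.existVars) :
    ∀ F : Fact,
      ↑F.vars ⊆ adomS (fullClosure Th' (insert (τ.head.rename σ')
        {G : Fact | G ∈ P ∧ G.vars ⊆ (τ.head.rename σ').vars})) →
      entailsS Th (fullClosure Th' (insert (τ.head.rename σ')
        {G : Fact | G ∈ P ∧ G.vars ⊆ (τ.head.rename σ').vars})) F →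
      F ∈ fullClosure Th' (insert (τ.head.rename σ')
        {G : Fact | G ∈ P ∧ G.vars ⊆ (τ.head.rename σ').vars}) := by
  intro F hFvars hFent
  classical
  set H : Fact := τ.head.rename σ' with hH
  set nInh : Set Fact := {G : Fact | G ∈ P ∧ G.vars ⊆ H.vars} with hInh
  set X : Set Fact := insert H nInh with hX
  have hFX : entailsS Th X F := entailsS_of_entailsS_fullClosure hsat.2.1 hFent
  have hFH : F.vars ⊆ H.vars := by
    intro a ha
    have h1 : (a : ℕ) ∈ adomS (fullClosure Th' X) := hFvars (by exact_mod_cast ha)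
    have h2 : a ∈ adomS X := adomS_fullClosure Th' X h1
    exact_mod_cast adomS_insert_inh trivial h2
  by_cases hNZ : ∃ y ∈ τ.existVars, σ' y ∈ F.vars
  · -- F mentions a fresh null: go through the childish saturation
    have hkey := key_claim hst.1 hPfin hPsat hτ htrig hext hfresh hinj hFX hFH hNZ
    set sideS : Set Fact := {G : Fact | G ∈ P ∧ G.rel ∈ S' ∧ G.vars ⊆ H.vars} with hSS
    have hsfin : sideS.Finite := hPfin.subset (fun G hG => hG.1)
    set C : Finset Fact := insert H hsfin.toFinset with hC
    have hCcoe : (↑C : Set Fact) = insert H sideS := by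
      ext G; simp [hC, Set.Finite.mem_toFinset]
    have hmemC : ∀ G ∈ C, G = H ∨ G ∈ sideS := by
      intro G hG
      rcases Finset.mem_insert.1 hG with rfl | hG'
      · exact Or.inl rfl
      · exact Or.inr (hsfin.mem_toFinset.1 hG')
    have hchild : childish Th S' (maxWidth Th) C := by
      refine ⟨H, Finset.mem_insert_self _ _, ?_, ?_, ?_, ?_⟩
      · show H.rel ∉ S'
        exact hst.2.2.2 τ hτ hnf
      · exact head_iso hst.2.1 hτ htrig hext hfresh hinj
      · intro G hG hne
        rcases hmemC G hG with rfl | hside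
        · exact absurd rfl hne
        · exact ⟨hside.2.1, hside.2.2⟩
      · have hsub : adomF (C.erase H) ⊆ Finset.image σ' τ.exported := by
          intro a ha
          obtain ⟨G, hG, haG⟩ := Finset.mem_biUnion.1 ha
          have hGside : G ∈ sideS := by
            rcases hmemC G (Finset.mem_of_mem_erase hG) with rfl | hside
            · exact absurd rfl (Finset.ne_of_mem_erase hG)
            · exact hside
          have haH : a ∈ H.vars := hGside.2.2 haG
          have haP : a ∈ adomS P := mem_adomS_of_mem hGside.1 haG
          rcases hvar_cases htrig hext a haH with ⟨y, hy, rfl⟩ | ⟨⟨x, hx, rfl⟩, -⟩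
          · exact absurd haP (hfresh y hy)
          · exact Finset.mem_image_of_mem _ hx
        calc (adomF (C.erase H)).card
            ≤ (Finset.image σ' τ.exported).card := Finset.card_le_card hsub
          _ ≤ τ.exported.card := Finset.card_image_le
          _ = τ.width := rfl
          _ ≤ maxWidth Th := Finset.le_sup hτ
    have hFentC : entailsF C Th F := by
      rw [entailsF_iff_entailsS, hCcoe]
      exact hkey
    have hFadom : F.vars ⊆ adomF C := by
      intro a ha
      exact Finset.mem_biUnion.2 ⟨H, Finset.mem_insert_self _ _, hFH ha⟩
    have hsat' := hsat.2.2 C hchild F hFadom hFentC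
    intro J hXJ hfull
    refine hsat' J ?_ ?_
    · rw [hCcoe]
      intro G hG
      rcases hG with rfl | ⟨h1, h2, h3⟩
      · exact hXJ (Set.mem_insert _ _)
      · exact hXJ (Set.mem_insert_of_mem _ ⟨h1, h3⟩)
    · intro τ' hτ'
      exact hfull τ' hτ' (hsat.1 τ' hτ')
  · push_neg at hNZ
    have := freshfree_mem hPfin hPsat hτ htrig hext hfresh hinj hFX hFH hNZ
    exact subset_fullClosure Th' X (Set.mem_insert_of_mem _ ⟨this.1, this.2⟩)

end NewNode


/-! #### Invariants of shortcut chase trees -/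

section TreeInvSec

variable {Th Th' : Finset TGD} {S' : Finset ℕ} {I : Finset Fact}

lemma dropLast_append_single (g : List ℕ) (k : ℕ) : (g ++ [k]).dropLast = g := by
  simp

lemma prefix_of_ne {u v : List ℕ} (h : u <+: v) (hne : u ≠ v) : u <+: v.dropLast := by
  obtain ⟨t, rfl⟩ := h
  have ht : t ≠ [] := by rintro rfl; simp at hne
  rw [List.dropLast_append_of_ne_nil ht]
  exact ⟨t.dropLast, rfl⟩

lemma not_prefix_of_shorter {u v : List ℕ} (h : v.length < u.length) : ¬ u <+: v :=
  fun hc => absurd hc.length_le (by omega)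

/-- The global invariant maintained by the shortcut chase. -/
structure TreeInv (Th Th' : Finset TGD) (I : Finset Fact) (T : SCTree) : Prop where
  root_mem : [] ∈ T.nodes
  root_lbl : T.lbl [] = ↑I
  parent_mem : ∀ v ∈ T.nodes, v ≠ [] → v.dropLast ∈ T.nodes
  lbl_fin : ∀ v ∈ T.nodes, (T.lbl v).Finite
  sat : ∀ v ∈ T.nodes, ∀ F : Fact, ↑F.vars ⊆ adomS (T.lbl v) →
    entailsS Th (T.lbl v) F → F ∈ T.lbl v
  struct : ∀ v ∈ T.nodes, v ≠ [] → ∃ τ ∈ Th, ∃ σ σ' : ℕ → ℕ, ¬τ.isFull ∧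
    (∀ A ∈ τ.body, A.rename σ ∈ T.lbl v.dropLast) ∧
    (∀ x ∈ τ.bodyVars, σ' x = σ x) ∧
    Set.InjOn σ' ↑τ.existVars ∧
    (∀ y ∈ τ.existVars, σ' y ∉ adomS (T.lbl v.dropLast)) ∧
    T.lbl v = fullClosure Th' (insert (τ.head.rename σ')
      {G : Fact | G ∈ T.lbl v.dropLast ∧ G.vars ⊆ (τ.head.rename σ').vars})
  fresh : ∀ v ∈ T.nodes, v ≠ [] → ∀ a ∈ adomS (T.lbl v),
    a ∈ adomS (T.lbl v.dropLast) ∨ ∀ u ∈ T.nodes, ¬ v <+: u → a ∉ adomS (T.lbl u)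

lemma treeInv_init (hfs : factSaturated Th I) : TreeInv Th Th' I (initSC I) := by
  have hroot : (initSC I).lbl [] = ↑I := by simp [initSC]
  have hnodes : ∀ v ∈ (initSC I).nodes, v = [] := by
    intro v hv
    simpa [initSC] using hv
  constructor
  · show ([] : List ℕ) ∈ ({[]} : Finset (List ℕ)); exact Finset.mem_singleton_self _
  · exact hroot
  · intro v hv hne
    exact absurd (hnodes v hv) hne
  · intro v hv
    rw [hnodes v hv, hroot]
    exact I.finite_toSet
  · intro v hv F hvars hent
    rw [hnodes v hv] at hvars hent ⊢
    rw [hroot] at hvars hent ⊢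
    refine hfs F ?_ hent
    rw [adomS_coe] at hvars
    exact_mod_cast hvars
  · intro v hv hne
    exact absurd (hnodes v hv) hne
  · intro v hv hne
    exact absurd (hnodes v hv) hne

namespace TreeInv

variable {T : SCTree}

lemma prefix_mem (hT : TreeInv Th Th' I T) :
    ∀ v ∈ T.nodes, ∀ u, u <+: v → u ∈ T.nodes := by
  have main : ∀ n, ∀ v ∈ T.nodes, v.length ≤ n → ∀ u, u <+: v → u ∈ T.nodes := by
    intro n
    induction n with
    | zero =>
      intro v hv hlen u hu
      have : v = [] := List.length_eq_zero_iff.1 (Nat.le_zero.1 hlen)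
      subst this
      rw [List.prefix_nil.1 hu]
      exact hv
    | succ n ih =>
      intro v hv hlen u hu
      by_cases he : u = v
      · subst he; exact hv
      · have hv' : v ≠ [] := by
          rintro rfl
          exact he (List.prefix_nil.1 hu)
        refine ih v.dropLast (hT.parent_mem v hv hv') ?_ u (prefix_of_ne hu he)
        have := (List.length_dropLast : v.dropLast.length = v.length - 1)
        have : 0 < v.length := List.length_pos_iff.2 hv'
        omega
  intro v hv u hu
  exact main v.length v hv le_rfl u hu

/-- The active domain of a non-root label is contained in the head fact variables. -/
lemma adom_sub_struct {v : List ℕ} (hv : v ∈ T.nodes) (hne : v ≠ [])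
    (hT : TreeInv Th Th' I T) :
    ∃ τ ∈ Th, ∃ σ σ' : ℕ → ℕ, ¬τ.isFull ∧
      (∀ A ∈ τ.body, A.rename σ ∈ T.lbl v.dropLast) ∧
      (∀ x ∈ τ.bodyVars, σ' x = σ x) ∧
      Set.InjOn σ' ↑τ.existVars ∧
      (∀ y ∈ τ.existVars, σ' y ∉ adomS (T.lbl v.dropLast)) ∧
      T.lbl v = fullClosure Th' (insert (τ.head.rename σ')
        {G : Fact | G ∈ T.lbl v.dropLast ∧ G.vars ⊆ (τ.head.rename σ').vars}) ∧
      adomS (T.lbl v) ⊆ ↑(τ.head.rename σ').vars := by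
  obtain ⟨τ, hτ, σ, σ', h1, h2, h3, h4, h5, h6⟩ := hT.struct v hv hne
  refine ⟨τ, hτ, σ, σ', h1, h2, h3, h4, h5, h6, ?_⟩
  rw [h6]
  intro a ha
  exact adomS_insert_inh trivial (adomS_fullClosure _ _ ha)

lemma pullDown (hT : TreeInv Th Th' I T) :
    ∀ (w v : List ℕ), v ∈ T.nodes → w <+: v →
      ∀ s : Fact, s ∈ T.lbl w → ↑s.vars ⊆ adomS (T.lbl v) → s ∈ T.lbl v := by
  have main : ∀ n, ∀ (w v : List ℕ), v ∈ T.nodes → v.length ≤ n → w <+: v →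
      ∀ s : Fact, s ∈ T.lbl w → ↑s.vars ⊆ adomS (T.lbl v) → s ∈ T.lbl v := by
    intro n
    induction n with
    | zero =>
      intro w v hv hlen hwv s hs hvars
      have : v = [] := List.length_eq_zero_iff.1 (Nat.le_zero.1 hlen)
      subst this
      rwa [List.prefix_nil.1 hwv] at hs
    | succ n ih =>
      intro w v hv hlen hwv s hs hvars
      by_cases he : w = v
      · subst he; exact hs
      · have hv' : v ≠ [] := by
          rintro rfl
          exact he (List.prefix_nil.1 hwv)
        have hwmem : w ∈ T.nodes := hT.prefix_mem v hv w hwv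
        have hvars' : ↑s.vars ⊆ adomS (T.lbl v.dropLast) := by
          intro a ha
          rcases hT.fresh v hv hv' a (hvars ha) with h | h
          · exact h
          · exact absurd (mem_adomS_of_mem hs (by exact_mod_cast ha))
              (h w hwmem (not_prefix_of_shorter
                (lt_of_le_of_ne hwv.length_le (fun hl => he (List.IsPrefix.eq_of_length hwv hl)))))
        have hsp : s ∈ T.lbl v.dropLast := by
          refine ih w v.dropLast (hT.parent_mem v hv hv') ?_ (prefix_of_ne hwv he) s hs hvars'
          have h1 := (List.length_dropLast : v.dropLast.length = v.length - 1)
          have h2 : 0 < v.length := List.length_pos_iff.2 hv'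
          omega
        -- now step down into v
        obtain ⟨τ, hτ, σ, σ', h1, h2, h3, h4, h5, h6, h7⟩ := hT.adom_sub_struct hv hv'
        rw [h6]
        refine subset_fullClosure _ _ (Set.mem_insert_of_mem _ ⟨hsp, ?_⟩)
        intro a ha
        have : (a : ℕ) ∈ adomS (T.lbl v) := hvars (by exact_mod_cast ha)
        exact_mod_cast h7 this
  intro w v hv
  exact main v.length w v hv le_rfl

lemma pull (hT : TreeInv Th Th' I T) (hent : ∀ τ' ∈ Th', logEntails Th τ') :
    ∀ (u v : List ℕ), u ∈ T.nodes → v ∈ T.nodes →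
      ∀ s : Fact, s ∈ T.lbl u → ↑s.vars ⊆ adomS (T.lbl v) → s ∈ T.lbl v := by
  have main : ∀ n, ∀ (u v : List ℕ), u ∈ T.nodes → u.length ≤ n → v ∈ T.nodes →
      ∀ s : Fact, s ∈ T.lbl u → ↑s.vars ⊆ adomS (T.lbl v) → s ∈ T.lbl v := by
    intro n
    induction n with
    | zero =>
      intro u v hu hlen hv s hs hvars
      have : u = [] := List.length_eq_zero_iff.1 (Nat.le_zero.1 hlen)
      subst this
      exact hT.pullDown [] v hv v.nil_prefix s hs hvars
    | succ n ih =>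
      intro u v hu hlen hv s hs hvars
      by_cases huv : u <+: v
      · exact hT.pullDown u v hv huv s hs hvars
      · have hu' : u ≠ [] := by
          rintro rfl
          exact huv v.nil_prefix
        -- move s up one step
        have hvars' : ↑s.vars ⊆ adomS (T.lbl u.dropLast) := by
          intro a ha
          rcases hT.fresh u hu hu' a (mem_adomS_of_mem hs (by exact_mod_cast ha)) with h | h
          · exact h
          · exact absurd (hvars ha) (h v hv huv)
        obtain ⟨τ, hτ, σ, σ', h1, h2, h3, h4, h5, h6⟩ := hT.struct u hu hu'
        have hself : entailsS Th (insert (τ.head.rename σ')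
            {G : Fact | G ∈ T.lbl u.dropLast ∧ G.vars ⊆ (τ.head.rename σ').vars}) s := by
          refine fullClosure_entailsS hent ?_
          rw [← h6]; exact hs
        have hup : s ∈ T.lbl u.dropLast := by
          refine hT.sat u.dropLast (hT.parent_mem u hu hu') s hvars' ?_
          exact null_elim (hT.lbl_fin _ (hT.parent_mem u hu hu')) hτ h2 h3 h5 h4 hself hvars'
        refine ih u.dropLast v (hT.parent_mem u hu hu') ?_ hv s hup hvars
        have hd1 := (List.length_dropLast : u.dropLast.length = u.length - 1)
        have hd2 : 0 < u.length := List.length_pos_iff.2 hu'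
        omega
  intro u v hu hv
  exact main u.length u v hu le_rfl hv

end TreeInv

end TreeInvSec


section StepPreserve

variable {Th Th' : Finset TGD} {S' : Finset ℕ} {I : Finset Fact}

lemma append_single_ne_nil (g : List ℕ) (k : ℕ) : g ++ [k] ≠ [] := by simp

/-- Preservation of the invariant by a shortcut chase step. -/
lemma TreeInv.step {T : SCTree} (hT : TreeInv Th Th' I T)
    (hst : stronglyObeys Th S') (hsat : childishSaturation Th S' (maxWidth Th) Th')
    {g : List ℕ} {τ : TGD} {σ σ' : ℕ → ℕ} {k : ℕ}
    (hg : g ∈ T.nodes) (hτ : τ ∈ Th) (hnf : ¬τ.isFull)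
    (htrig : ∀ A ∈ τ.body, A.rename σ ∈ T.lbl g)
    (hext : ∀ x ∈ τ.bodyVars, σ' x = σ x)
    (hfreshF : ∀ y ∈ τ.existVars, ∀ u ∈ T.nodes, ∀ F ∈ T.lbl u, σ' y ∉ F.vars)
    (hinj : Set.InjOn σ' ↑τ.existVars)
    (hnew : (g ++ [k]) ∉ T.nodes) :
    TreeInv Th Th' I ⟨insert (g ++ [k]) T.nodes,
      Function.update T.lbl (g ++ [k]) (fullClosure Th' (insert (τ.head.rename σ')
        { F : Fact | F ∈ T.lbl g ∧ F.vars ⊆ (τ.head.rename σ').vars }))⟩ := by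
  classical
  set v₀ : List ℕ := g ++ [k] with hv₀
  set H : Fact := τ.head.rename σ' with hH
  set L : Set Fact := fullClosure Th' (insert H { F : Fact | F ∈ T.lbl g ∧ F.vars ⊆ H.vars })
    with hL
  have hfresh : ∀ y ∈ τ.existVars, ∀ u ∈ T.nodes, σ' y ∉ adomS (T.lbl u) := by
    rintro y hy u hu ⟨F, hF, hvF⟩
    exact hfreshF y hy u hu F hF hvF
  have hold : ∀ u ∈ T.nodes, (⟨insert v₀ T.nodes, Function.update T.lbl v₀ L⟩ : SCTree).lbl u
      = T.lbl u := by
    intro u hu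
    show Function.update T.lbl v₀ L u = T.lbl u
    refine Function.update_of_ne ?_ _ _
    rintro rfl
    exact hnew hu
  have hnewlbl : (⟨insert v₀ T.nodes, Function.update T.lbl v₀ L⟩ : SCTree).lbl v₀ = L :=
    Function.update_self _ _ _
  have hd : v₀.dropLast = g := dropLast_append_single g k
  have hadomL : adomS L ⊆ ↑H.vars := by
    intro a ha
    exact adomS_insert_inh trivial (adomS_fullClosure _ _ ha)
  have hLvar : ∀ a ∈ adomS L, (∃ y ∈ τ.existVars, σ' y = a) ∨ a ∈ adomS (T.lbl g) := by
    intro a ha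
    have : a ∈ H.vars := by exact_mod_cast hadomL ha
    rcases hvar_cases htrig hext a this with h | ⟨-, h⟩
    · exact Or.inl h
    · exact Or.inr h
  constructor
  · exact Finset.mem_insert_of_mem hT.root_mem
  · rw [hold [] hT.root_mem]; exact hT.root_lbl
  · intro v hv hne
    rcases Finset.mem_insert.1 hv with rfl | hv'
    · rw [hd]; exact Finset.mem_insert_of_mem hg
    · exact Finset.mem_insert_of_mem (hT.parent_mem v hv' hne)
  · intro v hv
    rcases Finset.mem_insert.1 hv with rfl | hv'
    · rw [hnewlbl, hL]
      exact fullClosure_finite Th' (Set.Finite.insert _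
        ((hT.lbl_fin g hg).subset (fun G hG => hG.1)))
    · rw [hold v hv']; exact hT.lbl_fin v hv'
  · intro v hv F hvars hent
    rcases Finset.mem_insert.1 hv with rfl | hv'
    · rw [hnewlbl] at hvars hent ⊢
      exact newNodeSat hst hsat (hT.lbl_fin g hg) (hT.sat g hg) hτ hnf htrig hext
        (fun y hy => hfresh y hy g hg) hinj F hvars hent
    · rw [hold v hv'] at hvars hent ⊢
      exact hT.sat v hv' F hvars hent
  · intro v hv hne
    rcases Finset.mem_insert.1 hv with rfl | hv'
    · refine ⟨τ, hτ, σ, σ', hnf, ?_, hext, hinj, ?_, ?_⟩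
      · rw [hd, hold g hg]; exact htrig
      · rw [hd, hold g hg]; exact fun y hy => hfresh y hy g hg
      · rw [hd, hnewlbl, hold g hg]
    · obtain ⟨τ₁, hτ₁, σ₁, σ₁', k1, k2, k3, k4, k5, k6⟩ := hT.struct v hv' hne
      have hpar : v.dropLast ∈ T.nodes := hT.parent_mem v hv' hne
      refine ⟨τ₁, hτ₁, σ₁, σ₁', k1, ?_, k3, k4, ?_, ?_⟩
      · rw [hold v.dropLast hpar]; exact k2
      · rw [hold v.dropLast hpar]; exact k5
      · rw [hold v hv', hold v.dropLast hpar]; exact k6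
  · intro v hv hne a ha
    rcases Finset.mem_insert.1 hv with rfl | hv'
    · rw [hnewlbl] at ha
      rcases hLvar a ha with ⟨y, hy, rfl⟩ | hmem
      · refine Or.inr ?_
        intro u hu hnp
        rcases Finset.mem_insert.1 hu with rfl | hu'
        · exact absurd (List.prefix_refl _) hnp
        · rw [hold u hu']
          exact hfresh y hy u hu'
      · refine Or.inl ?_
        rw [hd, hold g hg]; exact hmem
    · rw [hold v hv'] at ha
      have hpar : v.dropLast ∈ T.nodes := hT.parent_mem v hv' hne
      rcases hT.fresh v hv' hne a ha with h | h
      · refine Or.inl ?_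
        rw [hold v.dropLast hpar]; exact h
      · refine Or.inr ?_
        intro u hu hnp
        rcases Finset.mem_insert.1 hu with rfl | hu'
        · -- u is the new node
          rw [hnewlbl]
          intro hc
          rcases hLvar a hc with ⟨y, hy, rfl⟩ | hmem
          · exact hfresh y hy v hv' ha
          · refine h g hg ?_ hmem
            intro hvg
            exact hnp (hvg.trans ⟨[k], rfl⟩)
        · rw [hold u hu']
          exact h u hu' hnp

end StepPreserve


/-! #### The fair shortcut chase sequence -/

section Sequence

variable (Th Th' : Finset TGD)

noncomputable def headWit (b : ℕ) (τ : TGD) (l : List ℕ) : ℕ → ℕ :=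
  fun x => if x ∈ τ.existVars then b + (τ.existVars.sort (· ≤ ·)).idxOf x
    else cfun τ l x

open Classical in
noncomputable def scStepFn (n : ℕ) (p : SCTree × ℕ) : SCTree × ℕ :=
  match Encodable.decode (α := List ℕ × TGD × List ℕ) n.unpair.2 with
  | none => p
  | some (v, τ, l) =>
    if h : v ∈ p.1.nodes ∧ τ ∈ Th ∧ ¬τ.isFull ∧ (v ++ [n]) ∉ p.1.nodes ∧
        ∀ A ∈ τ.body, A.rename (cfun τ l) ∈ p.1.lbl v then
      (⟨insert (v ++ [n]) p.1.nodes,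
        Function.update p.1.lbl (v ++ [n])
          (fullClosure Th' (insert (τ.head.rename (headWit p.2 τ l))
            { F : Fact | F ∈ p.1.lbl v ∧ F.vars ⊆ (τ.head.rename (headWit p.2 τ l)).vars }))⟩,
       p.2 + τ.existVars.card)
    else p

noncomputable def scSeq (I : Finset Fact) : ℕ → SCTree × ℕ
  | 0 => (initSC I, (adomF I).sup id + 1)
  | n+1 => scStepFn Th Th' n (scSeq I n)

/-- The one-step relation: either nothing happens or a genuine chase step. -/
lemma scStepFn_cases (n : ℕ) (p : SCTree × ℕ) :
    scStepFn Th Th' n p = p ∨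
    ∃ v τ l, v ∈ p.1.nodes ∧ τ ∈ Th ∧ ¬τ.isFull ∧ (v ++ [n]) ∉ p.1.nodes ∧
      (∀ A ∈ τ.body, A.rename (cfun τ l) ∈ p.1.lbl v) ∧
      scStepFn Th Th' n p =
        (⟨insert (v ++ [n]) p.1.nodes,
          Function.update p.1.lbl (v ++ [n])
            (fullClosure Th' (insert (τ.head.rename (headWit p.2 τ l))
              { F : Fact | F ∈ p.1.lbl v ∧
                F.vars ⊆ (τ.head.rename (headWit p.2 τ l)).vars }))⟩,
         p.2 + τ.existVars.card) := by
  classical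
  unfold scStepFn
  rcases hdec : Encodable.decode (α := List ℕ × TGD × List ℕ) n.unpair.2 with _ | ⟨v, τ, l⟩
  · exact Or.inl rfl
  · dsimp only
    by_cases h : v ∈ p.1.nodes ∧ τ ∈ Th ∧ ¬τ.isFull ∧ (v ++ [n]) ∉ p.1.nodes ∧
        ∀ A ∈ τ.body, A.rename (cfun τ l) ∈ p.1.lbl v
    · refine Or.inr ⟨v, τ, l, h.1, h.2.1, h.2.2.1, h.2.2.2.1, h.2.2.2.2, ?_⟩
      rw [dif_pos h]
    · rw [dif_neg h]
      exact Or.inl rfl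

lemma headWit_ext (b : ℕ) (τ : TGD) (l : List ℕ) :
    ∀ x ∈ τ.bodyVars, headWit b τ l x = cfun τ l x := by
  intro x hx
  rw [headWit, if_neg (fun hc => TGD.exist_not_body hc hx)]

lemma headWit_ge (b : ℕ) (τ : TGD) (l : List ℕ) {y : ℕ} (hy : y ∈ τ.existVars) :
    b ≤ headWit b τ l y := by
  rw [headWit, if_pos hy]; omega

lemma headWit_lt (b : ℕ) (τ : TGD) (l : List ℕ) {y : ℕ} (hy : y ∈ τ.existVars) :
    headWit b τ l y < b + τ.existVars.card := by
  rw [headWit, if_pos hy]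
  have hmem : y ∈ τ.existVars.sort (· ≤ ·) := (Finset.mem_sort _).2 hy
  have := List.idxOf_lt_length_iff.2 hmem
  rw [Finset.length_sort] at this
  omega

lemma headWit_inj (b : ℕ) (τ : TGD) (l : List ℕ) :
    Set.InjOn (headWit b τ l) ↑τ.existVars := by
  intro x hx y hy hxy
  have hx' : x ∈ τ.existVars := by exact_mod_cast hx
  have hy' : y ∈ τ.existVars := by exact_mod_cast hy
  rw [headWit, if_pos hx', headWit, if_pos hy'] at hxy
  have : (τ.existVars.sort (· ≤ ·)).idxOf x = (τ.existVars.sort (· ≤ ·)).idxOf y := by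
    omega
  exact (List.idxOf_inj ((Finset.mem_sort _).2 hx')).1 this

/-- The sequence invariant. -/
structure SeqInv (Th Th' : Finset TGD) (I : Finset Fact) (n : ℕ) (p : SCTree × ℕ) : Prop where
  inv : TreeInv Th Th' I p.1
  bound : ∀ u ∈ p.1.nodes, ∀ a ∈ adomS (p.1.lbl u), a < p.2
  entries : ∀ u ∈ p.1.nodes, ∀ j ∈ u, j < n
  reach : Relation.ReflTransGen (SCStep Th Th') (initSC I) p.1

variable {Th Th'}

lemma seqInv_zero {S' : Finset ℕ} {I : Finset Fact} (hfs : factSaturated Th I) :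
    SeqInv Th Th' I 0 (scSeq Th Th' I 0) := by
  have hnodes : (scSeq Th Th' I 0).1.nodes = {[]} := rfl
  constructor
  · exact treeInv_init hfs
  · intro u hu a ha
    rw [hnodes] at hu
    rw [Finset.mem_singleton.1 hu] at ha
    have hlbl : (scSeq Th Th' I 0).1.lbl [] = ↑I := by simp [scSeq, initSC]
    rw [hlbl, adomS_coe] at ha
    have : a ≤ (adomF I).sup id := Finset.le_sup (f := id) (by exact_mod_cast ha)
    show a < (adomF I).sup id + 1
    omega
  · intro u hu j hj
    rw [hnodes] at hu
    rw [Finset.mem_singleton.1 hu] at hj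
    simp at hj
  · exact Relation.ReflTransGen.refl

lemma seqInv_succ {S' : Finset ℕ} {I : Finset Fact}
    (hst : stronglyObeys Th S') (hsat : childishSaturation Th S' (maxWidth Th) Th')
    {n : ℕ} (h : SeqInv Th Th' I n (scSeq Th Th' I n)) :
    SeqInv Th Th' I (n + 1) (scSeq Th Th' I (n + 1)) := by
  have hstep : scSeq Th Th' I (n+1) = scStepFn Th Th' n (scSeq Th Th' I n) := rfl
  rcases scStepFn_cases Th Th' n (scSeq Th Th' I n) with heq | ⟨v, τ, l, h1, h2, h3, h4, h5, heq⟩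
  · rw [hstep, heq]
    exact ⟨h.inv, h.bound, fun u hu j hj => Nat.lt_succ_of_lt (h.entries u hu j hj), h.reach⟩
  · rw [hstep, heq]
    set p := scSeq Th Th' I n with hp
    set b := p.2 with hb
    set σ' : ℕ → ℕ := headWit b τ l with hσ'
    have hfreshF : ∀ y ∈ τ.existVars, ∀ u ∈ p.1.nodes, ∀ F ∈ p.1.lbl u, σ' y ∉ F.vars := by
      intro y hy u hu F hF hc
      have h1 : σ' y < b := h.bound u hu (σ' y) (mem_adomS_of_mem hF hc)
      have h2 : b ≤ σ' y := headWit_ge b τ l hy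
      omega
    constructor
    · exact TreeInv.step h.inv hst hsat h1 h2 h3 h5 (headWit_ext b τ l) hfreshF
        (headWit_inj b τ l) h4
    · -- bound
      intro u hu a ha
      show a < b + τ.existVars.card
      rcases Finset.mem_insert.1 hu with rfl | hu'
      · have hlbl : (⟨insert (v ++ [n]) p.1.nodes, Function.update p.1.lbl (v ++ [n])
            (fullClosure Th' (insert (τ.head.rename σ')
              { F : Fact | F ∈ p.1.lbl v ∧ F.vars ⊆ (τ.head.rename σ').vars }))⟩
              : SCTree).lbl (v ++ [n]) = fullClosure Th' (insert (τ.head.rename σ')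
              { F : Fact | F ∈ p.1.lbl v ∧ F.vars ⊆ (τ.head.rename σ').vars }) :=
          Function.update_self _ _ _
        rw [hlbl] at ha
        have haH : a ∈ (τ.head.rename σ').vars := by
          exact_mod_cast adomS_insert_inh trivial (adomS_fullClosure _ _ ha)
        rcases hvar_cases h5 (headWit_ext b τ l) a haH with ⟨y, hy, rfl⟩ | ⟨-, hmem⟩
        · exact headWit_lt b τ l hy
        · have := h.bound v h1 a hmem
          omega
      · have hlbl : (⟨insert (v ++ [n]) p.1.nodes, Function.update p.1.lbl (v ++ [n])
            (fullClosure Th' (insert (τ.head.rename σ')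
              { F : Fact | F ∈ p.1.lbl v ∧ F.vars ⊆ (τ.head.rename σ').vars }))⟩
              : SCTree).lbl u = p.1.lbl u := by
          refine Function.update_of_ne ?_ _ _
          rintro rfl
          exact h4 hu'
        rw [hlbl] at ha
        have := h.bound u hu' a ha
        omega
    · -- entries
      intro u hu j hj
      rcases Finset.mem_insert.1 hu with rfl | hu'
      · rcases List.mem_append.1 hj with hj' | hj'
        · exact Nat.lt_succ_of_lt (h.entries v h1 j hj')
        · rw [List.mem_singleton.1 hj']
          exact Nat.lt_succ_self n
      · exact Nat.lt_succ_of_lt (h.entries u hu' j hj)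
    · -- reachability
      refine Relation.ReflTransGen.tail h.reach ?_
      exact SCStep.step p.1 v τ (cfun τ l) σ' n h1 h2 h3 h5 (headWit_ext b τ l)
        hfreshF (headWit_inj b τ l) h4

lemma seqInv_all {S' : Finset ℕ} {I : Finset Fact}
    (hst : stronglyObeys Th S') (hsat : childishSaturation Th S' (maxWidth Th) Th')
    (hfs : factSaturated Th I) :
    ∀ n, SeqInv Th Th' I n (scSeq Th Th' I n) := by
  intro n
  induction n with
  | zero => exact seqInv_zero (S' := S') hfs
  | succ n ih => exact seqInv_succ hst hsat ih

/-- One-step monotonicity. -/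
lemma scStep_mono (n : ℕ) (p : SCTree × ℕ) :
    p.1.nodes ⊆ (scStepFn Th Th' n p).1.nodes ∧
    (∀ u ∈ p.1.nodes, (scStepFn Th Th' n p).1.lbl u = p.1.lbl u) := by
  rcases scStepFn_cases Th Th' n p with heq | ⟨v, τ, l, h1, h2, h3, h4, h5, heq⟩
  · rw [heq]
    exact ⟨subset_rfl, fun u _ => rfl⟩
  · rw [heq]
    constructor
    · intro u hu
      show u ∈ insert (v ++ [n]) p.1.nodes
      exact Finset.mem_insert_of_mem hu
    · intro u hu
      show Function.update p.1.lbl (v ++ [n]) _ u = p.1.lbl u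
      refine Function.update_of_ne ?_ _ _
      rintro rfl
      exact h4 hu

/-- Monotonicity of the sequence. -/
lemma scSeq_mono {I : Finset Fact} {m n : ℕ} (h : m ≤ n) :
    (scSeq Th Th' I m).1.nodes ⊆ (scSeq Th Th' I n).1.nodes ∧
    (∀ u ∈ (scSeq Th Th' I m).1.nodes,
      (scSeq Th Th' I n).1.lbl u = (scSeq Th Th' I m).1.lbl u) := by
  induction n with
  | zero =>
    have : m = 0 := Nat.le_zero.1 h
    subst this
    exact ⟨subset_rfl, fun u _ => rfl⟩
  | succ n ih =>
    rcases Nat.lt_succ_iff_lt_or_eq.1 (Nat.lt_succ_of_le h) with hlt | rfl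
    swap
    · exact ⟨subset_rfl, fun u _ => rfl⟩
    have hmn : m ≤ n := Nat.lt_succ_iff.1 hlt
    obtain ⟨hn1, hl1⟩ := ih hmn
    obtain ⟨hn2, hl2⟩ := scStep_mono (Th := Th) (Th' := Th') n (scSeq Th Th' I n)
    have hstep : scSeq Th Th' I (n+1) = scStepFn Th Th' n (scSeq Th Th' I n) := rfl
    rw [hstep]
    exact ⟨fun u hu => hn2 (hn1 hu), fun u hu => (hl2 u (hn1 hu)).trans (hl1 u hu)⟩

lemma scSeq_facts_mono {I : Finset Fact} {m n : ℕ} (h : m ≤ n) :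
    (scSeq Th Th' I m).1.facts ⊆ (scSeq Th Th' I n).1.facts := by
  rintro F ⟨u, hu, hF⟩
  obtain ⟨hn1, hl1⟩ := scSeq_mono (Th := Th) (Th' := Th') (I := I) h
  exact ⟨u, hn1 hu, by rw [hl1 u hu]; exact hF⟩

end Sequence


/-! #### Firing lemma and the limit model -/

section Limit

variable {Th Th' : Finset TGD} {S' : Finset ℕ} {I : Finset Fact}

/-- The limit instance of the fair shortcut chase. -/
def seqJ (Th Th' : Finset TGD) (I : Finset Fact) : Set Fact :=
  {F : Fact | ∃ n, F ∈ (scSeq Th Th' I n).1.facts}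

lemma scSeq_fires
    (hinv : ∀ n, SeqInv Th Th' I n (scSeq Th Th' I n))
    {m : ℕ} {v : List ℕ} {τ : TGD} {l : List ℕ}
    (hv : v ∈ (scSeq Th Th' I m).1.nodes) (hτ : τ ∈ Th) (hnf : ¬τ.isFull)
    (htrig : ∀ A ∈ τ.body, A.rename (cfun τ l) ∈ (scSeq Th Th' I m).1.lbl v) :
    ∃ σ' : ℕ → ℕ, (∀ x ∈ τ.bodyVars, σ' x = cfun τ l x) ∧
      τ.head.rename σ' ∈ seqJ Th Th' I := by
  classical
  set c : List ℕ × TGD × List ℕ := (v, τ, l) with hc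
  set n : ℕ := Nat.pair m (Encodable.encode c) with hn
  have hmn : m ≤ n := Nat.left_le_pair _ _
  obtain ⟨hn1, hl1⟩ := scSeq_mono (Th := Th) (Th' := Th') (I := I) hmn
  have hvn : v ∈ (scSeq Th Th' I n).1.nodes := hn1 hv
  have htrign : ∀ A ∈ τ.body, A.rename (cfun τ l) ∈ (scSeq Th Th' I n).1.lbl v := by
    intro A hA; rw [hl1 v hv]; exact htrig A hA
  have hnew : v ++ [n] ∉ (scSeq Th Th' I n).1.nodes := by
    intro hcon
    have := (hinv n).entries _ hcon n (by simp)
    omega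
  set p : SCTree × ℕ := scSeq Th Th' I n with hp
  have hfire : scStepFn Th Th' n p =
      (⟨insert (v ++ [n]) p.1.nodes,
        Function.update p.1.lbl (v ++ [n])
          (fullClosure Th' (insert (τ.head.rename (headWit p.2 τ l))
            { F : Fact | F ∈ p.1.lbl v ∧
              F.vars ⊆ (τ.head.rename (headWit p.2 τ l)).vars }))⟩,
       p.2 + τ.existVars.card) := by
    unfold scStepFn
    have hdec : (Nat.unpair n).2 = Encodable.encode c := by rw [hn, Nat.unpair_pair]
    rw [hdec, Encodable.encodek]
    dsimp only
    rw [dif_pos ⟨hvn, hτ, hnf, hnew, htrign⟩]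
  refine ⟨headWit p.2 τ l, headWit_ext _ _ _, n + 1, ?_⟩
  have hstep : scSeq Th Th' I (n+1) = scStepFn Th Th' n p := rfl
  rw [hstep, hfire]
  refine ⟨v ++ [n], Finset.mem_insert_self _ _, ?_⟩
  show τ.head.rename (headWit p.2 τ l) ∈ Function.update p.1.lbl (v ++ [n]) _ (v ++ [n])
  rw [Function.update_self]
  exact subset_fullClosure _ _ (Set.mem_insert _ _)

lemma exists_common_index (Q : List Atom) (σ : ℕ → ℕ)
    (h : ∀ A ∈ Q, A.rename σ ∈ seqJ Th Th' I) :
    ∃ N, ∀ A ∈ Q, A.rename σ ∈ (scSeq Th Th' I N).1.facts := by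
  induction Q with
  | nil => exact ⟨0, by simp⟩
  | cons A t ih =>
    obtain ⟨N1, hN1⟩ := ih (fun B hB => h B (List.mem_cons_of_mem _ hB))
    obtain ⟨N2, hN2⟩ := h A List.mem_cons_self
    refine ⟨max N1 N2, ?_⟩
    intro B hB
    rcases List.mem_cons.1 hB with rfl | hB'
    · exact scSeq_facts_mono (le_max_right _ _) hN2
    · exact scSeq_facts_mono (le_max_left _ _) (hN1 B hB')

lemma seqJ_supset : ↑I ⊆ seqJ Th Th' I := by
  intro F hF
  refine ⟨0, [], ?_, ?_⟩
  · show ([] : List ℕ) ∈ (initSC I).nodes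
    exact Finset.mem_singleton_self _
  · show F ∈ (initSC I).lbl []
    simpa [initSC] using hF

/-- The limit of the fair shortcut chase is a model of `Th`. -/
lemma seqJ_model (hst : stronglyObeys Th S')
    (hsat : childishSaturation Th S' (maxWidth Th) Th')
    (hfs : factSaturated Th I) :
    ∀ γ ∈ Th, γ.holdsIn (seqJ Th Th' I) := by
  have hinv := seqInv_all (Th' := Th') hst hsat hfs
  intro γ hγ ρ htrig
  obtain ⟨N, hN⟩ := exists_common_index γ.body ρ htrig
  obtain ⟨A', ⟨hA'mem, hA'g⟩, hsides⟩ := hst.1 γ hγ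
  obtain ⟨u, hu, hgf⟩ := hN A' hA'mem
  have hTI := (hinv N).inv
  -- all body facts can be pulled into the guard node
  have hpull : ∀ B ∈ γ.body, B.rename ρ ∈ (scSeq Th Th' I N).1.lbl u := by
    intro B hB
    obtain ⟨uB, huB, hFB⟩ := hN B hB
    refine hTI.pull hsat.2.1 uB u huB hu _ hFB ?_
    intro a ha
    have ha' : a ∈ (B.rename ρ).vars := by exact_mod_cast ha
    rw [Atom.vars_rename] at ha'
    obtain ⟨x, hx, rfl⟩ := Finset.mem_image.1 ha'
    refine mem_adomS_of_mem hgf ?_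
    rw [Atom.vars_rename]
    exact Finset.mem_image_of_mem _ (hA'g (TGD.mem_bodyVars.2 ⟨B, hB, hx⟩))
  by_cases hfull : γ.isFull
  · -- full: the head is already present by fact-saturation
    refine ⟨ρ, fun _ _ => rfl, ?_⟩
    have hent : entailsS Th ((scSeq Th Th' I N).1.lbl u) (γ.head.rename ρ) :=
      entailsS_full_step hγ hfull hpull
    have hvars : ↑(γ.head.rename ρ).vars ⊆ adomS ((scSeq Th Th' I N).1.lbl u) := by
      intro a ha
      have ha' : a ∈ (γ.head.rename ρ).vars := by exact_mod_cast ha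
      rw [Atom.vars_rename] at ha'
      obtain ⟨x, hx, rfl⟩ := Finset.mem_image.1 ha'
      refine mem_adomS_of_mem hgf ?_
      rw [Atom.vars_rename]
      exact Finset.mem_image_of_mem _ (hA'g (hfull hx))
    have := hTI.sat u hu _ hvars hent
    exact ⟨N, u, hu, this⟩
  · -- non-full: fire the corresponding canonical step
    have htrigc : ∀ A ∈ γ.body, A.rename (cfun γ (canonσ γ ρ)) ∈ (scSeq Th Th' I N).1.lbl u := by
      intro A hA
      have : A.rename (cfun γ (canonσ γ ρ)) = A.rename ρ := by
        refine Atom.rename_congr (fun a ha => ?_)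
        exact cfun_canon (TGD.mem_bodyVars.2 ⟨A, hA, ha⟩)
      rw [this]
      exact hpull A hA
    obtain ⟨σ', hagree, hhead⟩ := scSeq_fires hinv hu hγ hfull htrigc
    refine ⟨σ', ?_, hhead⟩
    intro x hx
    rw [hagree x hx]
    exact cfun_canon hx

/-! #### Soundness of the shortcut chase -/

lemma soundness_step {T₁ T₂ : SCTree} (hstep : SCStep Th Th' T₁ T₂)
    (hent : ∀ τ' ∈ Th', logEntails Th τ')
    {J : Set Fact} (hJTh : ∀ τ ∈ Th, τ.holdsIn J)
    {φ : ℕ → ℕ} (hφ : ∀ F ∈ T₁.facts, F.rename φ ∈ J) :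
    ∃ φ' : ℕ → ℕ, ∀ F ∈ T₂.facts, F.rename φ' ∈ J := by
  classical
  cases hstep with
  | step g τ σ σ' k hg hτ hnf htrig hext hfresh hinj hnew =>
    have htrigJ : ∀ A ∈ τ.body, A.rename (φ ∘ σ) ∈ J := by
      intro A hA
      have := hφ _ ⟨g, hg, htrig A hA⟩
      rwa [Atom.rename_rename] at this
    obtain ⟨σ'', hagr, hhd⟩ := hJTh τ hτ (φ ∘ σ) htrigJ
    set φ' : ℕ → ℕ := fun a =>
      if h : ∃ y, y ∈ τ.existVars ∧ σ' y = a then σ'' h.choose else φ a with hφ'def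
    have hp1 : ∀ F ∈ T₁.facts, F.rename φ' = F.rename φ := by
      rintro F ⟨u, hu, hF⟩
      refine Atom.rename_congr (fun a ha => ?_)
      rw [hφ'def]
      refine dif_neg ?_
      rintro ⟨y, hy, rfl⟩
      exact hfresh y hy u hu F hF ha
    have hp2 : ∀ y ∈ τ.existVars, φ' (σ' y) = σ'' y := by
      intro y hy
      have hex : ∃ y', y' ∈ τ.existVars ∧ σ' y' = σ' y := ⟨y, hy, rfl⟩
      rw [hφ'def]
      simp only [dif_pos hex]
      have hspec := hex.choose_spec
      rw [hinj hspec.1 hy hspec.2]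
    have hp3 : (τ.head.rename σ').rename φ' = τ.head.rename σ'' := by
      rw [Atom.rename_rename]
      refine Atom.rename_congr (fun x hx => ?_)
      rcases TGD.head_var_cases hx with hex | hbody
      · exact hp2 x hex
      · show φ' (σ' x) = σ'' x
        rw [hext x hbody]
        have hσx : ∀ u ∈ T₁.nodes, ∀ F ∈ T₁.lbl u, σ x ∈ F.vars → φ' (σ x) = φ (σ x) := by
          intro u hu F hF hmem
          rw [hφ'def]
          refine dif_neg ?_
          rintro ⟨y, hy, hyx⟩
          exact hfresh y hy u hu F hF (hyx ▸ hmem)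
        obtain ⟨A, hA, hxA⟩ := TGD.mem_bodyVars.1 hbody
        have hmem : σ x ∈ (A.rename σ).vars := by
          rw [Atom.vars_rename]; exact Finset.mem_image_of_mem _ hxA
        rw [hσx g hg _ (htrig A hA) hmem]
        exact (hagr x hbody).symm
    refine ⟨φ', ?_⟩
    rintro F ⟨u, hu, hF⟩
    rcases Finset.mem_insert.1 hu with rfl | hu'
    · -- the new node
      have hlbl : F ∈ fullClosure Th' (insert (τ.head.rename σ')
          { G : Fact | G ∈ T₁.lbl g ∧ G.vars ⊆ (τ.head.rename σ').vars }) := by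
        have := hF
        rwa [show (⟨insert (g ++ [k]) T₁.nodes, Function.update T₁.lbl (g ++ [k]) _⟩
          : SCTree).lbl (g ++ [k]) = _ from Function.update_self _ _ _] at this
      have hsub : fullClosure Th' (insert (τ.head.rename σ')
          { G : Fact | G ∈ T₁.lbl g ∧ G.vars ⊆ (τ.head.rename σ').vars }) ⊆
          {G : Fact | G.rename φ' ∈ J} := by
        refine fullClosure_subset ?_ ?_
        · intro G hG
          rcases hG with rfl | ⟨hG1, -⟩
          · show (τ.head.rename σ').rename φ' ∈ J
            rw [hp3]; exact hhd
          · show G.rename φ' ∈ J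
            rw [hp1 G ⟨g, hg, hG1⟩]
            exact hφ G ⟨g, hg, hG1⟩
        · intro τ' hτ' hfull' ρ htrig'
          refine ⟨ρ, fun _ _ => rfl, ?_⟩
          have htrigJ' : ∀ A ∈ τ'.body, A.rename (φ' ∘ ρ) ∈ J := by
            intro A hA
            have := htrig' A hA
            rwa [show A.rename (φ' ∘ ρ) = (A.rename ρ).rename φ' from
              (Atom.rename_rename _ _ _).symm]
          obtain ⟨ρ'', hagr', hhd'⟩ := hent τ' hτ' J hJTh (φ' ∘ ρ) htrigJ'
          show (τ'.head.rename ρ).rename φ' ∈ J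
          rw [Atom.rename_rename]
          have : τ'.head.rename (φ' ∘ ρ) = τ'.head.rename ρ'' :=
            Atom.rename_congr (fun a ha => (hagr' a (hfull' ha)).symm)
          rw [this]; exact hhd'
      exact hsub hlbl
    · -- an old node
      have hne : u ≠ g ++ [k] := by rintro rfl; exact hnew hu'
      have : F ∈ T₁.lbl u := by
        have := hF
        rwa [show (⟨insert (g ++ [k]) T₁.nodes, Function.update T₁.lbl (g ++ [k]) _⟩
          : SCTree).lbl u = T₁.lbl u from Function.update_of_ne hne _ _] at this
      rw [hp1 F ⟨u, hu', this⟩]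
      exact hφ F ⟨u, hu', this⟩

lemma soundness {T : SCTree}
    (hreach : Relation.ReflTransGen (SCStep Th Th') (initSC I) T)
    (hent : ∀ τ' ∈ Th', logEntails Th τ')
    {J : Set Fact} (hIJ : ↑I ⊆ J) (hJTh : ∀ τ ∈ Th, τ.holdsIn J) :
    ∃ φ : ℕ → ℕ, ∀ F ∈ T.facts, F.rename φ ∈ J := by
  induction hreach with
  | refl =>
    refine ⟨id, ?_⟩
    rintro F ⟨u, hu, hF⟩
    have : u = [] := by simpa [initSC] using hu
    subst this
    have : F ∈ (↑I : Set Fact) := by simpa [initSC] using hF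
    rw [Atom.rename_id]
    exact hIJ this
  | tail hab hbc ih =>
    obtain ⟨φ, hφ⟩ := ih
    exact soundness_step hbc hent hJTh hφ

end Limit

lemma final_proof (Th : Finset TGD) (S' : Finset ℕ) (Th' : Finset TGD)
    (hst : stronglyObeys Th S')
    (hsat : childishSaturation Th S' (maxWidth Th) Th')
    (I : Finset Fact) (hfs : factSaturated Th I) (Q : CQ) :
    entailsQ I Th Q ↔
      ∃ T : SCTree, Relation.ReflTransGen (SCStep Th Th') (initSC I) T ∧
        CQholds Q T.facts := by
  constructor
  · intro hQ
    have hmodel := seqJ_model (Th' := Th') hst hsat hfs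
    obtain ⟨σQ, hσQ⟩ := hQ (seqJ Th Th' I) seqJ_supset (fun τ hτ => hmodel τ hτ)
    obtain ⟨N, hN⟩ := exists_common_index Q σQ hσQ
    exact ⟨(scSeq Th Th' I N).1, (seqInv_all hst hsat hfs N).reach, σQ, hN⟩
  · rintro ⟨T, hreach, σQ, hσQ⟩
    intro J hIJ hJTh
    obtain ⟨φ, hφ⟩ := soundness hreach hsat.2.1 hIJ (fun τ hτ => hJTh τ hτ)
    refine ⟨φ ∘ σQ, fun A hA => ?_⟩
    have := hφ _ (hσQ A hA)
    rwa [Atom.rename_rename] at this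

end Aux
/-- completeness of the shortcut chase (Proposition 8.4). Let `Σ` be a
finite set of single-headed GTGDs strongly obeying a side signature `S'`, and let `Σ'` be
any childish saturation of `Σ`. Then the shortcut chase based on `Σ'` emulates `Σ` on any
`Σ`-fact-saturated instance: for each `Σ`-fact-saturated instance `I` and each Boolean
conjunctive query `Q`, `I, Σ ⊨ Q` if and only if `Q` holds in an instance produced from
`I` by a shortcut chase sequence starting at `I`. -/
theorem shortcut_chase_complete (Th : Finset TGD) (S' : Finset ℕ) (Th' : Finset TGD)
    (hst : stronglyObeys Th S')
    (hsat : childishSaturation Th S' (maxWidth Th) Th')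
    (I : Finset Fact) (hfs : factSaturated Th I) (Q : CQ) :
    entailsQ I Th Q ↔
      ∃ T : SCTree, Relation.ReflTransGen (SCStep Th Th') (initSC I) T ∧
        CQholds Q T.facts := by
  exact final_proof Th S' Th' hst hsat I hfs Q

end GTGDPaper
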